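/- arXiv:1804.00903 — 9 statements merged into one kernel-verified Lean document; each statement's English description precedes it below -/
import Mathlib

section
/- Let m ≥ 1 be an integer, let γ ∈ (0,1), and let 0 < r₁ < r₂. Define f : ℝ → ℝ by f(s) = γ for s ∈ [0, r₁] and f(s) = −(1−γ) for s ∈ (r₁, r₂], define h(t) = ∫₀ᵗ s^{m−1} f(s) ds for t ∈ [0, r₂], and define v(r) = ∫_r^{r₂} t^{1−m} h(t) dt for r ∈ [0, r₂]. Then v(r) ≥ 0 for every r ∈ [0, r₂] if and only if r₁^m ≥ (1−γ) r₂^m. -/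
open MeasureTheory intervalIntegral

/-- The radial solution of `−v'' − ((m−1)/r)v' = γ·1_{[0,r₁]} − (1−γ)·1_{(r₁,r₂]}` on the
ball `B_{r₂} ⊆ ℝ^m` with `v'(0) = 0`, `v(r₂) = 0`, written in integrated form, is
non-negative on `[0, r₂]` if and only if `r₁^m ≥ (1−γ) r₂^m`. -/
theorem stmt2 (m : ℕ) (hm : 1 ≤ m) (γ : ℝ) (hγ : γ ∈ Set.Ioo (0 : ℝ) 1)
    (r₁ r₂ : ℝ) (hr₁ : 0 < r₁) (hr₁₂ : r₁ < r₂)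
    (f : ℝ → ℝ)
    (hf₁ : ∀ s ∈ Set.Icc (0 : ℝ) r₁, f s = γ)
    (hf₂ : ∀ s ∈ Set.Ioc r₁ r₂, f s = -(1 - γ))
    (h : ℝ → ℝ) (hh : ∀ t ∈ Set.Icc (0 : ℝ) r₂, h t = ∫ s in (0 : ℝ)..t, s ^ (m - 1) * f s)
    (v : ℝ → ℝ) (hv : ∀ r ∈ Set.Icc (0 : ℝ) r₂, v r = ∫ t in r..r₂, (t ^ (m - 1))⁻¹ * h t) :
    (∀ r ∈ Set.Icc (0 : ℝ) r₂, 0 ≤ v r) ↔ r₁ ^ m ≥ (1 - γ) * r₂ ^ m := by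
  obtain ⟨hγ0, hγ1⟩ := hγ
  have hγ1' : (0:ℝ) < 1 - γ := by linarith
  have hr₂ : (0:ℝ) < r₂ := hr₁.trans hr₁₂
  have hm1 : m - 1 + 1 = m := Nat.succ_pred_eq_of_pos hm
  have hmR : (m:ℝ) ≠ 0 := Nat.cast_ne_zero.mpr (by omega)
  have hmpos : (0:ℝ) < m := by positivity
  have hcastm : ((m - 1 : ℕ) : ℝ) + 1 = (m : ℝ) := by exact_mod_cast hm1
  -- formula for h on [0, r₁]
  have hA : ∀ t ∈ Set.Icc (0:ℝ) r₁, h t = γ * t ^ m / m := by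
    intro t ht
    rw [hh t ⟨ht.1, ht.2.trans hr₁₂.le⟩]
    rw [intervalIntegral.integral_congr (g := fun s => s ^ (m-1) * γ)
      (by intro s hs
          rw [Set.uIcc_of_le ht.1] at hs
          simp only
          rw [hf₁ s ⟨hs.1, hs.2.trans ht.2⟩])]
    rw [intervalIntegral.integral_mul_const, integral_pow, hm1, hcastm]
    rw [zero_pow (by omega)]
    ring
  -- formula for h on (r₁, r₂]
  have hB : ∀ t ∈ Set.Ioc r₁ r₂, h t = (r₁ ^ m - (1-γ) * t ^ m) / m := by
    intro t ht
    have ht0 : (0:ℝ) ≤ t := (hr₁.trans ht.1).le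
    have I₁ : IntervalIntegrable (fun s => s ^ (m-1) * f s) volume 0 r₁ := by
      rw [intervalIntegrable_iff, Set.uIoc_of_le hr₁.le]
      have base : IntegrableOn (fun s : ℝ => s ^ (m-1) * γ) (Set.Ioc 0 r₁) volume :=
        ((continuous_pow (m-1)).mul continuous_const).integrableOn_Ioc
      exact base.congr_fun
        (fun s hs => by rw [hf₁ s ⟨hs.1.le, hs.2⟩]) measurableSet_Ioc
    have I₂ : IntervalIntegrable (fun s => s ^ (m-1) * f s) volume r₁ t := by
      rw [intervalIntegrable_iff, Set.uIoc_of_le ht.1.le]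
      have base : IntegrableOn (fun s : ℝ => s ^ (m-1) * (-(1-γ))) (Set.Ioc r₁ t) volume :=
        ((continuous_pow (m-1)).mul continuous_const).integrableOn_Ioc
      exact base.congr_fun
        (fun s hs => by rw [hf₂ s ⟨hs.1, hs.2.trans ht.2⟩]) measurableSet_Ioc
    rw [hh t ⟨ht0, ht.2⟩, ← intervalIntegral.integral_add_adjacent_intervals I₁ I₂]
    have e₁ : (∫ s in (0:ℝ)..r₁, s ^ (m-1) * f s) = γ * r₁ ^ m / m := by
      rw [intervalIntegral.integral_congr (g := fun s => s ^ (m-1) * γ)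
        (by intro s hs
            rw [Set.uIcc_of_le hr₁.le] at hs
            simp only
            rw [hf₁ s hs])]
      rw [intervalIntegral.integral_mul_const, integral_pow, hm1, hcastm, zero_pow (by omega)]
      ring
    have e₂ : (∫ s in r₁..t, s ^ (m-1) * f s) = -(1-γ) * (t ^ m - r₁ ^ m) / m := by
      rw [intervalIntegral.integral_congr_ae (g := fun s => s ^ (m-1) * (-(1-γ)))
        (Filter.Eventually.of_forall (fun s hs => by
          rw [Set.uIoc_of_le ht.1.le] at hs
          rw [hf₂ s ⟨hs.1, hs.2.trans ht.2⟩]))]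
      rw [intervalIntegral.integral_mul_const, integral_pow, hm1, hcastm]
      ring
    rw [e₁, e₂]
    ring
  constructor
  · -- forward: contrapositive
    intro hvpos
    by_contra hlt
    push_neg at hlt
    set t₀ : ℝ := (r₁ ^ m / (1-γ)) ^ ((m:ℝ)⁻¹) with ht₀def
    have hx0 : (0:ℝ) < r₁ ^ m / (1-γ) := by positivity
    have ht₀pow : t₀ ^ m = r₁ ^ m / (1-γ) :=
      Real.rpow_inv_natCast_pow hx0.le (by omega)
    have ht₀0 : (0:ℝ) < t₀ := Real.rpow_pos_of_pos hx0 _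
    have ht₀r₁ : r₁ < t₀ := by
      refine lt_of_pow_lt_pow_left₀ m ht₀0.le ?_
      rw [ht₀pow, lt_div_iff₀ hγ1']
      nlinarith [pow_pos hr₁ m]
    have ht₀r₂ : t₀ < r₂ := by
      refine lt_of_pow_lt_pow_left₀ m hr₂.le ?_
      rw [ht₀pow, div_lt_iff₀ hγ1']
      linarith
    have hmem : t₀ ∈ Set.Icc (0:ℝ) r₂ := ⟨ht₀0.le, ht₀r₂.le⟩
    have hform : ∀ t ∈ Set.Ioc t₀ r₂,
        (t ^ (m-1))⁻¹ * h t = (t ^ (m-1))⁻¹ * ((r₁ ^ m - (1-γ) * t ^ m) / m) := by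
      intro t ht
      rw [hB t ⟨ht₀r₁.trans ht.1, ht.2⟩]
    have hcont : ContinuousOn (fun t : ℝ => -((t ^ (m-1))⁻¹ * ((r₁ ^ m - (1-γ) * t ^ m) / m)))
        (Set.uIcc t₀ r₂) := by
      rw [Set.uIcc_of_le ht₀r₂.le]
      refine ContinuousOn.neg (ContinuousOn.mul (ContinuousOn.inv₀
        (continuous_pow (m-1)).continuousOn ?_) (by fun_prop))
      intro x hx
      exact pow_ne_zero _ (ne_of_gt (ht₀0.trans_le hx.1))
    have hInt : IntervalIntegrable (fun t => -((t ^ (m-1))⁻¹ * h t)) volume t₀ r₂ := by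
      rw [intervalIntegrable_iff, Set.uIoc_of_le ht₀r₂.le]
      have base : IntegrableOn
          (fun t : ℝ => -((t ^ (m-1))⁻¹ * ((r₁ ^ m - (1-γ) * t ^ m) / m)))
          (Set.Ioc t₀ r₂) volume := by
        have := hcont.intervalIntegrable (μ := volume)
        rw [intervalIntegrable_iff, Set.uIoc_of_le ht₀r₂.le] at this
        exact this
      exact base.congr_fun
        (fun t ht => by rw [hform t ht]) measurableSet_Ioc
    have hpos : 0 < ∫ t in t₀..r₂, -((t ^ (m-1))⁻¹ * h t) := by
      refine intervalIntegral_pos_of_pos_on hInt ?_ ht₀r₂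
      intro t ht
      rw [hform t ⟨ht.1, ht.2.le⟩]
      have h1 : (0:ℝ) < (t ^ (m-1))⁻¹ := by
        have := ht₀0.trans ht.1; positivity
      have h2 : t₀ ^ m < t ^ m := pow_lt_pow_left₀ ht.1 ht₀0.le (by omega)
      have h3 : r₁ ^ m - (1-γ) * t ^ m < 0 := by
        rw [ht₀pow] at h2
        have := (div_lt_iff₀ hγ1').mp h2
        linarith
      have : (r₁ ^ m - (1-γ) * t ^ m) / m < 0 := div_neg_of_neg_of_pos h3 hmpos
      nlinarith
    rw [intervalIntegral.integral_neg] at hpos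
    have := hvpos t₀ hmem
    rw [hv t₀ hmem] at this
    linarith
  · -- backward
    intro hge r hr
    rw [hv r hr]
    refine intervalIntegral.integral_nonneg hr.2 ?_
    intro t ht
    have ht0 : (0:ℝ) ≤ t := hr.1.trans ht.1
    have hht : 0 ≤ h t := by
      rcases le_or_gt t r₁ with hc | hc
      · rw [hA t ⟨ht0, hc⟩]; positivity
      · rw [hB t ⟨hc, ht.2⟩]
        have : (1-γ) * t ^ m ≤ (1-γ) * r₂ ^ m :=
          mul_le_mul_of_nonneg_left (pow_le_pow_left₀ ht0 ht.2 m) hγ1'.le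
        have : (0:ℝ) ≤ r₁ ^ m - (1-γ) * t ^ m := by linarith
        positivity
    have : (0:ℝ) ≤ (t ^ (m-1))⁻¹ := by positivity
    exact mul_nonneg this hht
end

section
/- Let m ≥ 2 be an integer, let x ∈ ℝ^m, let r > 0, and let A ⊆ ℝ^m be a Lebesgue measurable set with |A| ≤ ω_m r^m. Then ∫_A ‖x − y‖^{1−m} dy ≤ m ω_m r. -/
open MeasureTheory Measure Set Metric
open scoped ENNReal

lemma lintegral_fun_norm_addHaar' {E : Type*} [NormedAddCommGroup E] [NormedSpace ℝ E]
    [MeasurableSpace E] [BorelSpace E] [FiniteDimensional ℝ E] [Nontrivial E]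
    (μ : Measure E) [μ.IsAddHaarMeasure] {g : ℝ → ℝ≥0∞} (hg : Measurable g) :
    ∫⁻ x, g ‖x‖ ∂μ = μ.toSphere univ *
      ∫⁻ y in Ioi (0:ℝ), ENNReal.ofReal (y ^ (Module.finrank ℝ E - 1)) * g y := by
  calc
    ∫⁻ x, g ‖x‖ ∂μ = ∫⁻ x : ({0}ᶜ : Set E), g ‖(x : E)‖ ∂(μ.comap (↑)) := by
      rw [lintegral_subtype_comap (measurableSet_singleton _).compl fun x ↦ g ‖x‖,
        restrict_compl_singleton]
    _ = ∫⁻ p : sphere (0:E) 1 × Ioi (0:ℝ), g p.2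
          ∂(μ.toSphere.prod (volumeIoiPow (Module.finrank ℝ E - 1))) :=
      by rw [← (μ.measurePreserving_homeomorphUnitSphereProd).lintegral_comp_emb
        (Homeomorph.measurableEmbedding _)
        (fun p : sphere (0:E) 1 × Ioi (0:ℝ) => g p.2)]; simp [homeomorphUnitSphereProd_apply_snd_coe]
    _ = μ.toSphere univ * ∫⁻ y : Ioi (0:ℝ), g y ∂(volumeIoiPow (Module.finrank ℝ E - 1)) := by
      have hmeas : Measurable fun p : sphere (0:E) 1 × Ioi (0:ℝ) => g p.2 :=
        hg.comp (measurable_subtype_coe.comp measurable_snd)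
      rw [lintegral_prod _ hmeas.aemeasurable]
      simp [lintegral_const, mul_comm]
    _ = _ := by
      rw [Measure.volumeIoiPow, lintegral_withDensity_eq_lintegral_mul _
          ((measurable_subtype_coe.pow_const _).ennreal_ofReal)
          (show Measurable fun y : Ioi (0:ℝ) => g y from hg.comp measurable_subtype_coe),
        ← lintegral_subtype_comap measurableSet_Ioi
          (fun y : ℝ => ENNReal.ofReal (y ^ (Module.finrank ℝ E - 1)) * g y)]
      rfl

/-- Rearrangement (bathtub) bound: if `|A| ≤ ω_m r^m` then
`∫_A ‖x − y‖^{1−m} dy ≤ m ω_m r`, where `ω_m` is the volume of the unit ball in `ℝ^m`. -/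
theorem stmt3 (m : ℕ) (hm : 2 ≤ m) (x : EuclideanSpace ℝ (Fin m)) (r : ℝ) (hr : 0 < r)
    (A : Set (EuclideanSpace ℝ (Fin m))) (hA : MeasurableSet A)
    (ω : ℝ) (hω : ω = (volume (Metric.ball (0 : EuclideanSpace ℝ (Fin m)) 1)).toReal)
    (hAvol : volume A ≤ ENNReal.ofReal (ω * r ^ m)) :
    ∫ y in A, ‖x - y‖ ^ ((1 : ℝ) - m) ≤ m * ω * r := by
  haveI : Nonempty (Fin m) := ⟨⟨0, by omega⟩⟩
  haveI : Nontrivial (EuclideanSpace ℝ (Fin m)) := inferInstance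
  have hfr : Module.finrank ℝ (EuclideanSpace ℝ (Fin m)) = m := finrank_euclideanSpace_fin
  have hexp : (1 : ℝ) - m ≤ 0 := by
    have : (2 : ℝ) ≤ m := by exact_mod_cast hm
    linarith
  have hfnn : ∀ y : EuclideanSpace ℝ (Fin m), 0 ≤ ‖x - y‖ ^ ((1:ℝ) - m) :=
    fun y => Real.rpow_nonneg (norm_nonneg _) _
  have hfm : Measurable fun y : EuclideanSpace ℝ (Fin m) => ‖x - y‖ ^ ((1:ℝ) - m) :=
    ((measurable_const.sub measurable_id).norm).pow measurable_const
  have hωnn : 0 ≤ ω := hω ▸ ENNReal.toReal_nonneg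
  have hrhs : 0 ≤ (m : ℝ) * ω * r := by positivity
  rw [MeasureTheory.integral_eq_lintegral_of_nonneg_ae
      (Filter.Eventually.of_forall fun y => hfnn y) hfm.aestronglyMeasurable]
  refine ENNReal.toReal_le_of_le_ofReal hrhs ?_
  set g : EuclideanSpace ℝ (Fin m) → ℝ≥0∞ :=
    fun y => ENNReal.ofReal (‖x - y‖ ^ ((1:ℝ) - m)) with hg
  have hgm : Measurable g := hfm.ennreal_ofReal
  set B : Set (EuclideanSpace ℝ (Fin m)) := Metric.ball x r with hB
  have hBm : MeasurableSet B := measurableSet_ball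
  have hωball : ENNReal.ofReal ω = volume (Metric.ball (0 : EuclideanSpace ℝ (Fin m)) 1) := by
    rw [hω, ENNReal.ofReal_toReal measure_ball_lt_top.ne]
  have hballvol : volume B = ENNReal.ofReal (ω * r ^ m) := by
    rw [hB, Measure.addHaar_ball volume x hr.le, hfr, ENNReal.ofReal_mul hωnn, hωball, mul_comm]
  have hAB : volume A ≤ volume B := by rw [hballvol]; exact hAvol
  have hcres : volume (A \ B) ≤ volume (B \ A) := by
    have h1 : volume (A ∩ B) + volume (A \ B) = volume A := measure_inter_add_diff A hBm
    have h2 : volume (B ∩ A) + volume (B \ A) = volume B := measure_inter_add_diff B hA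
    have hfin : volume (A ∩ B) ≠ ⊤ :=
      ((measure_mono Set.inter_subset_right).trans_lt measure_ball_lt_top).ne
    have hle : volume (A ∩ B) + volume (A \ B) ≤ volume (A ∩ B) + volume (B \ A) := by
      rw [h1]
      calc volume A ≤ volume B := hAB
        _ = volume (A ∩ B) + volume (B \ A) := by rw [← h2, Set.inter_comm]
    exact (ENNReal.add_le_add_iff_left hfin).mp hle
  set c : ℝ≥0∞ := ENNReal.ofReal (r ^ ((1:ℝ) - m)) with hc
  have key : ∫⁻ y in B, g y ∂volume = ENNReal.ofReal (m * ω * r) := by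
    have hmp : MeasurePreserving (fun y : EuclideanSpace ℝ (Fin m) => x - y) volume volume :=
      measurePreserving_sub_left volume x
    have hpre : (fun y : EuclideanSpace ℝ (Fin m) => x - y) ⁻¹' Metric.ball 0 r = B := by
      ext y
      simp [hB, Metric.mem_ball, dist_eq_norm, norm_sub_rev x y]
    have hFm : Measurable fun z : EuclideanSpace ℝ (Fin m) =>
        ENNReal.ofReal (‖z‖ ^ ((1:ℝ) - m)) :=
      (measurable_norm.pow measurable_const).ennreal_ofReal
    have step1 : ∫⁻ y in B, g y ∂volume
        = ∫⁻ z in Metric.ball (0 : EuclideanSpace ℝ (Fin m)) r,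
            ENNReal.ofReal (‖z‖ ^ ((1:ℝ) - m)) ∂volume := by
      rw [← hpre, hmp.setLIntegral_comp_preimage measurableSet_ball hFm]
    set G : ℝ → ℝ≥0∞ := (Set.Iio r).indicator (fun t => ENNReal.ofReal (t ^ ((1:ℝ) - m)))
      with hGdef
    have hGm : Measurable G :=
      Measurable.indicator ((measurable_id.pow measurable_const).ennreal_ofReal)
        measurableSet_Iio
    have step2 : ∫⁻ z in Metric.ball (0 : EuclideanSpace ℝ (Fin m)) r,
          ENNReal.ofReal (‖z‖ ^ ((1:ℝ) - m)) ∂volume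
        = ∫⁻ z : EuclideanSpace ℝ (Fin m), G ‖z‖ ∂volume := by
      rw [← lintegral_indicator measurableSet_ball]
      refine lintegral_congr fun z => ?_
      by_cases h : ‖z‖ < r <;>
        simp [hGdef, Set.indicator, mem_ball_zero_iff, h]
    have step3 := lintegral_fun_norm_addHaar' (volume : Measure (EuclideanSpace ℝ (Fin m))) hGm
    have hinner : ∫⁻ t in Set.Ioi (0:ℝ),
        ENNReal.ofReal (t ^ (Module.finrank ℝ (EuclideanSpace ℝ (Fin m)) - 1)) * G t
          = ENNReal.ofReal r := by
      have e1 : ∀ t : ℝ,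
          ENNReal.ofReal (t ^ (Module.finrank ℝ (EuclideanSpace ℝ (Fin m)) - 1)) * G t
          = (Set.Iio r).indicator
              (fun t => ENNReal.ofReal (t ^ (m - 1)) * ENNReal.ofReal (t ^ ((1:ℝ) - m))) t := by
        intro t
        by_cases h : t ∈ Set.Iio r <;>
          simp [hGdef, Set.indicator, h, hfr]
      simp only [e1]
      rw [lintegral_indicator measurableSet_Iio, Measure.restrict_restrict measurableSet_Iio,
        Set.Iio_inter_Ioi]
      have e2 : ∀ t ∈ Set.Ioo (0:ℝ) r,
          ENNReal.ofReal (t ^ (m - 1)) * ENNReal.ofReal (t ^ ((1:ℝ) - m)) = 1 := by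
        intro t ht
        rw [← ENNReal.ofReal_mul (pow_nonneg ht.1.le _), ← Real.rpow_natCast t (m - 1),
          Nat.cast_sub (by omega : 1 ≤ m), Nat.cast_one, ← Real.rpow_add ht.1]
        norm_num
      rw [setLIntegral_congr_fun measurableSet_Ioo
        (fun t ht => e2 t ht), setLIntegral_one, Real.volume_Ioo,
        sub_zero]
    rw [step1, step2, step3, hinner, Measure.toSphere_apply_univ, hfr, ← hωball]
    rw [← ENNReal.ofReal_natCast m, ← ENNReal.ofReal_mul (by positivity),
      ← ENNReal.ofReal_mul (by positivity)]
  have hout : ∫⁻ y in A \ B, g y ∂volume ≤ c * volume (A \ B) := by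
    rw [← setLIntegral_const (A \ B) c]
    refine setLIntegral_mono measurable_const fun y hy => ?_
    refine ENNReal.ofReal_le_ofReal ?_
    have hyx : r ≤ ‖x - y‖ := by
      have h := hy.2
      simp only [hB, Metric.mem_ball, not_lt, dist_eq_norm] at h
      calc r ≤ ‖y - x‖ := h
        _ = ‖x - y‖ := norm_sub_rev y x
    exact Real.rpow_le_rpow_of_nonpos hr hyx hexp
  have hin : c * volume (B \ A) ≤ ∫⁻ y in B \ A, g y ∂volume := by
    rw [← setLIntegral_const (B \ A) c]
    refine setLIntegral_mono_ae hgm.aemeasurable ?_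
    have hxae : ∀ᵐ y : EuclideanSpace ℝ (Fin m) ∂volume, y ≠ x := by
      have h0 : volume ({x} : Set (EuclideanSpace ℝ (Fin m))) = 0 := measure_singleton x
      rw [ae_iff]
      refine measure_mono_null (fun y hy => ?_) h0
      simp only [Set.mem_setOf_eq, not_not] at hy
      simpa using hy
    filter_upwards [hxae] with y hy hyB
    refine ENNReal.ofReal_le_ofReal ?_
    have hxy : 0 < ‖x - y‖ := by
      rw [norm_pos_iff, sub_ne_zero]
      exact fun h => hy h.symm
    have hle : ‖x - y‖ ≤ r := by
      have h := hyB.1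
      simp only [hB, Metric.mem_ball, dist_eq_norm] at h
      calc ‖x - y‖ = ‖y - x‖ := norm_sub_rev x y
        _ ≤ r := h.le
    exact Real.rpow_le_rpow_of_nonpos hxy hle hexp
  calc ∫⁻ y in A, g y ∂volume
      = ∫⁻ y in A ∩ B, g y ∂volume + ∫⁻ y in A \ B, g y ∂volume :=
        (lintegral_inter_add_diff g A hBm).symm
    _ ≤ ∫⁻ y in A ∩ B, g y ∂volume + c * volume (A \ B) := add_le_add_right hout _
    _ ≤ ∫⁻ y in A ∩ B, g y ∂volume + c * volume (B \ A) :=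
        add_le_add_right (mul_le_mul_right hcres c) _
    _ ≤ ∫⁻ y in A ∩ B, g y ∂volume + ∫⁻ y in B \ A, g y ∂volume := add_le_add_right hin _
    _ = ∫⁻ y in B ∩ A, g y ∂volume + ∫⁻ y in B \ A, g y ∂volume := by rw [Set.inter_comm]
    _ = ∫⁻ y in B, g y ∂volume := lintegral_inter_add_diff g B hA
    _ = ENNReal.ofReal (m * ω * r) := key
end

section
/- Let m ≥ 3 be an integer, let e ∈ ℝ^m be a unit vector, let H = {y ∈ ℝ^m : ⟨y, e⟩ > 0}, let x ∈ H, let x* = x − 2⟨x, e⟩ e, and let c_m = Γ((m−2)/2)/(4π^{m/2}). Let r > 0 and let A ⊆ H be a Lebesgue measurable set with |A| ≤ ω_m r^m. Then ∫_A c_m (‖x − y‖^{2−m} − ‖x* − y‖^{2−m}) dy ≤ 2 r ⟨x, e⟩. -/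
open MeasureTheory RealInnerProductSpace Real

open Metric Set

private lemma aux_pow (n : ℕ) {a b : ℝ} (ha : 0 ≤ a) (hab : a ≤ b) :
    b ^ (n+1) - a ^ (n+1) ≤ ((n:ℝ)+1) * b ^ n * (b - a) := by
  induction n with
  | zero => simp
  | succ n ih =>
      have hb : 0 ≤ b := ha.trans hab
      have h1 : a ^ (n+1) ≤ b ^ (n+1) := pow_le_pow_left₀ ha hab _
      have h4 := mul_le_mul_of_nonneg_left ih hb
      have h5 := mul_le_mul_of_nonneg_left h1 (sub_nonneg.2 hab)
      push_cast
      calc b ^ (n+1+1) - a ^ (n+1+1)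
          = b * (b ^ (n+1) - a ^ (n+1)) + (b - a) * a ^ (n+1) := by ring
        _ ≤ b * (((n:ℝ)+1) * b ^ n * (b - a)) + (b - a) * b ^ (n+1) :=
            add_le_add h4 h5
        _ = ((n:ℝ)+1+1) * b ^ (n+1) * (b - a) := by ring

private lemma aux_inv (n : ℕ) {a b : ℝ} (ha : 0 < a) (hab : a ≤ b) :
    (a ^ (n+1))⁻¹ - (b ^ (n+1))⁻¹ ≤ ((n:ℝ)+1) * (b - a) / a ^ (n+2) := by
  have hb : 0 < b := ha.trans_le hab
  have key := aux_pow n ha.le hab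
  have e1 : (a ^ (n+1))⁻¹ - (b ^ (n+1))⁻¹
      = (b ^ (n+1) - a ^ (n+1)) / (a ^ (n+1) * b ^ (n+1)) := by
    field_simp
  rw [e1]
  have e2 : (b ^ (n+1) - a ^ (n+1)) / (a ^ (n+1) * b ^ (n+1))
      ≤ (((n:ℝ)+1) * b ^ n * (b - a)) / (a ^ (n+1) * b ^ (n+1)) := by
    gcongr
  refine e2.trans ?_
  rw [div_le_div_iff₀ (by positivity) (by positivity)]
  have hba : 0 ≤ b - a := sub_nonneg.2 hab
  have h9 : ((n:ℝ)+1) * b ^ n * (b - a) * a ^ (n+2)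
      = (((n:ℝ)+1) * (b-a) * a^(n+1) * b^n) * a := by ring
  have h10 : ((n:ℝ)+1) * (b - a) * (a^(n+1) * b^(n+1))
      = (((n:ℝ)+1) * (b-a) * a^(n+1) * b^n) * b := by ring
  rw [h9, h10]
  exact mul_le_mul_of_nonneg_left hab
    (mul_nonneg (mul_nonneg (mul_nonneg (by positivity) hba) (by positivity)) (by positivity))

private lemma aux_rpow (m : ℕ) (hm : 3 ≤ m) {a b : ℝ} (ha : 0 ≤ a) (hb : 0 < b)
    (hab : a ≤ b) :
    a ^ ((2:ℝ) - m) - b ^ ((2:ℝ) - m) ≤ ((m:ℝ) - 2) * (b - a) * a ^ ((1:ℝ) - m) := by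
  have hm2 : ((2:ℝ) - m) < 0 := by
    have : (3:ℝ) ≤ m := by exact_mod_cast hm
    linarith
  rcases ha.eq_or_lt with h0 | hapos
  · rw [← h0, Real.zero_rpow (by linarith), Real.zero_rpow (by
      have : (3:ℝ) ≤ m := by exact_mod_cast hm
      intro h; linarith [h])]
    simp only [zero_sub, mul_zero]
    have := Real.rpow_nonneg hb.le ((2:ℝ) - m)
    linarith
  obtain ⟨n, rfl⟩ : ∃ n, m = n + 3 := ⟨m - 3, by omega⟩
  have hc1 : ((2:ℝ) - ((n+3 : ℕ):ℝ)) = -(((n+1 : ℕ):ℝ)) := by push_cast; ring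
  have hc2 : ((1:ℝ) - ((n+3 : ℕ):ℝ)) = -(((n+2 : ℕ):ℝ)) := by push_cast; ring
  rw [hc1, hc2, Real.rpow_neg hapos.le, Real.rpow_neg hb.le, Real.rpow_neg hapos.le,
    Real.rpow_natCast, Real.rpow_natCast, Real.rpow_natCast]
  have key := aux_inv n hapos hab
  have hcast : ((n+3 : ℕ):ℝ) - 2 = (n:ℝ) + 1 := by push_cast; ring
  rw [hcast]
  calc (a ^ (n+1))⁻¹ - (b ^ (n+1))⁻¹ ≤ ((n:ℝ)+1) * (b - a) / a ^ (n+2) := key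
    _ = ((n:ℝ)+1) * (b - a) * (a ^ (n+2))⁻¹ := by rw [div_eq_mul_inv]

private lemma ball_int (m : ℕ) (hm : 3 ≤ m) (x : EuclideanSpace ℝ (Fin m)) {R : ℝ} (hR : 0 < R) :
    IntegrableOn (fun y : EuclideanSpace ℝ (Fin m) => ‖x - y‖ ^ ((1:ℝ) - m)) (ball x R) volume ∧
    ∫ y in ball x R, ‖x - y‖ ^ ((1:ℝ) - m) =
      m * (volume (ball (0 : EuclideanSpace ℝ (Fin m)) 1)).toReal * R := by
  haveI : Nonempty (Fin m) := ⟨⟨0, by omega⟩⟩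
  set g0 : EuclideanSpace ℝ (Fin m) → ℝ := fun z => ‖z‖ ^ ((1:ℝ) - m) with hg0
  set ω' : ℝ := (volume (ball (0 : EuclideanSpace ℝ (Fin m)) 1)).toReal with hω'
  have hω'nn : 0 ≤ ω' := ENNReal.toReal_nonneg
  have hg0m : Measurable g0 := by fun_prop
  have hg0nn : ∀ z, 0 ≤ g0 z := fun z => Real.rpow_nonneg (norm_nonneg z) _
  have h1m : ((1:ℝ) - m) ≤ 0 := by
    have : (3:ℝ) ≤ m := by exact_mod_cast hm
    linarith
  -- annuli
  set s : ℕ → Set (EuclideanSpace ℝ (Fin m)) := fun k => ball (0:EuclideanSpace ℝ (Fin m)) (R / 2 ^ k) \ ball (0:EuclideanSpace ℝ (Fin m)) (R / 2 ^ (k+1)) with hs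
  have hsm : ∀ k, MeasurableSet (s k) := fun k => measurableSet_ball.diff measurableSet_ball
  have hsb : ∀ k, ∀ z ∈ s k, ‖g0 z‖ ≤ (R / 2 ^ (k+1)) ^ ((1:ℝ) - m) := by
    intro k z hz
    have h1 : R / 2 ^ (k+1) ≤ ‖z‖ := by
      have := hz.2
      rw [mem_ball_zero_iff, not_lt] at this
      exact this
    have h2 : 0 < R / 2 ^ (k+1) := by positivity
    rw [Real.norm_of_nonneg (hg0nn z)]
    exact Real.rpow_le_rpow_of_nonpos h2 h1 h1m
  have hsfin : ∀ k, volume (s k) ≠ ⊤ := fun k =>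
    ((measure_mono diff_subset).trans_lt measure_ball_lt_top).ne
  have hInt : ∀ k, IntegrableOn g0 (s k) volume := by
    intro k
    exact Measure.integrableOn_of_bounded (hsfin k) hg0m.aestronglyMeasurable
      ((ae_restrict_mem (hsm k)).mono (hsb k))
  have hvol : ∀ k, (volume (s k)).toReal ≤ ω' * (R / 2 ^ k) ^ m := by
    intro k
    have h1 : volume (s k) ≤ volume (ball (0:EuclideanSpace ℝ (Fin m)) (R / 2 ^ k)) := measure_mono diff_subset
    have h2 : volume (ball (0:EuclideanSpace ℝ (Fin m)) (R / 2 ^ k))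
        = ENNReal.ofReal ((R / 2 ^ k) ^ m) * volume (ball (0:EuclideanSpace ℝ (Fin m)) 1) := by
      rw [Measure.addHaar_ball volume (0:EuclideanSpace ℝ (Fin m)) (by positivity : (0:ℝ) ≤ R / 2 ^ k),
        finrank_euclideanSpace_fin]
    calc (volume (s k)).toReal ≤ (volume (ball (0:EuclideanSpace ℝ (Fin m)) (R / 2 ^ k))).toReal :=
          ENNReal.toReal_mono measure_ball_lt_top.ne h1
      _ = (R / 2 ^ k) ^ m * ω' := by
          rw [h2, ENNReal.toReal_mul, ENNReal.toReal_ofReal (by positivity)]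
      _ = ω' * (R / 2 ^ k) ^ m := by ring
  have hIbd : ∀ k, ∫ z in s k, ‖g0 z‖ ≤ (R / 2 ^ (k+1)) ^ ((1:ℝ) - m) * (ω' * (R / 2 ^ k) ^ m) := by
    intro k
    have hM : (0:ℝ) ≤ (R / 2 ^ (k+1)) ^ ((1:ℝ) - m) := Real.rpow_nonneg (by positivity) _
    calc ∫ z in s k, ‖g0 z‖
        ≤ ∫ _z in s k, (R / 2 ^ (k+1)) ^ ((1:ℝ) - m) :=
          setIntegral_mono_on (hInt k).norm (integrableOn_const (hsfin k))
            (hsm k) (hsb k)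
      _ = (volume (s k)).toReal * (R / 2 ^ (k+1)) ^ ((1:ℝ) - m) := by
          rw [setIntegral_const, smul_eq_mul, measureReal_def]
      _ ≤ (R / 2 ^ (k+1)) ^ ((1:ℝ) - m) * (ω' * (R / 2 ^ k) ^ m) := by
          rw [mul_comm]
          exact mul_le_mul_of_nonneg_left (hvol k) hM
  -- geometric identity
  have hueq : ∀ k : ℕ, (R / 2 ^ (k+1)) ^ ((1:ℝ) - m) * (ω' * (R / 2 ^ k) ^ m)
      = ((R / 2) ^ ((1:ℝ) - m) * (ω' * R ^ m)) * (1/2 : ℝ) ^ k := by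
    intro k
    induction k with
    | zero => simp
    | succ k ih =>
      have h2 : (2:ℝ) ^ ((1:ℝ) - m) * (2:ℝ) ^ (m:ℕ) = 2 := by
        rw [← Real.rpow_natCast 2 m, ← Real.rpow_add two_pos]
        norm_num
      have key : (R / 2 ^ (k+1+1) : ℝ) ^ ((1:ℝ) - m)
          = (R / 2 ^ (k+1)) ^ ((1:ℝ) - m) / (2:ℝ) ^ ((1:ℝ) - m) := by
        rw [show (R / 2 ^ (k+1+1) : ℝ) = (R / 2 ^ (k+1)) / 2 by ring,
          Real.div_rpow (by positivity) (by norm_num)]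
      have key2 : ((R / 2 ^ (k+1) : ℝ)) ^ m = (R / 2 ^ k) ^ m / (2:ℝ) ^ (m:ℕ) := by
        rw [show (R / 2 ^ (k+1) : ℝ) = (R / 2 ^ k) / 2 by ring, div_pow]
      rw [key, key2]
      have expand : (R / 2 ^ (k+1)) ^ ((1:ℝ) - m) / (2:ℝ) ^ ((1:ℝ) - m)
            * (ω' * ((R / 2 ^ k) ^ m / (2:ℝ) ^ (m:ℕ)))
          = ((R / 2 ^ (k+1)) ^ ((1:ℝ) - m) * (ω' * (R / 2 ^ k) ^ m))
            * ((2:ℝ) ^ ((1:ℝ) - m) * (2:ℝ) ^ (m:ℕ))⁻¹ := by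
        rw [mul_inv]
        ring
      rw [expand, ih, h2]
      ring
  have hsummable : Summable fun k => ∫ z in s k, ‖g0 z‖ := by
    apply Summable.of_nonneg_of_le
      (fun k => setIntegral_nonneg (hsm k) fun z _ => norm_nonneg _)
      (fun k => (hIbd k).trans_eq (hueq k))
    exact (summable_geometric_two).mul_left _
  have hIU : IntegrableOn g0 (⋃ k, s k) volume :=
    integrableOn_iUnion_of_summable_integral_norm hInt hsummable
  have hU : (⋃ k, s k) = ball (0:EuclideanSpace ℝ (Fin m)) R \ {0} := by
    ext z
    simp only [mem_iUnion, hs, mem_diff, mem_ball_zero_iff, mem_singleton_iff, not_lt]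
    constructor
    · rintro ⟨k, hk1, hk2⟩
      have h2k : (1:ℝ) ≤ 2 ^ k := one_le_pow₀ (by norm_num)
      refine ⟨lt_of_lt_of_le hk1 (div_le_self hR.le h2k), ?_⟩
      intro h0
      rw [h0, norm_zero] at hk2
      have : (0:ℝ) < R / 2 ^ (k+1) := by positivity
      linarith
    · rintro ⟨hzR, hz0⟩
      have hzpos : 0 < ‖z‖ := norm_pos_iff.2 hz0
      have hex : ∃ k, R / 2 ^ (k+1) ≤ ‖z‖ := by
        obtain ⟨k, hk⟩ := pow_unbounded_of_one_lt (R / ‖z‖) (one_lt_two)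
        refine ⟨k, ?_⟩
        rw [div_le_iff₀ (by positivity)]
        rw [div_lt_iff₀ hzpos] at hk
        have h2k : (2:ℝ) ^ k ≤ 2 ^ (k+1) := by
          apply pow_le_pow_right₀ (by norm_num); omega
        nlinarith
      by_cases h0 : Nat.find hex = 0
      · refine ⟨0, ?_, ?_⟩
        · simpa using hzR
        · have := Nat.find_spec hex
          rwa [h0] at this
      · obtain ⟨j, hj⟩ := Nat.exists_eq_succ_of_ne_zero h0
        have hmin : ¬ (R / 2 ^ (j+1) ≤ ‖z‖) := Nat.find_min hex (by omega)
        refine ⟨j+1, by linarith [not_le.1 hmin], ?_⟩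
        have := Nat.find_spec hex
        rwa [hj] at this
  rw [hU] at hIU
  have h0vol : volume ({(0:EuclideanSpace ℝ (Fin m))} : Set (EuclideanSpace ℝ (Fin m))) = 0 := measure_singleton 0
  have hIball0 : IntegrableOn g0 (ball (0:EuclideanSpace ℝ (Fin m)) R) volume := by
    have hsing : IntegrableOn g0 ({(0:EuclideanSpace ℝ (Fin m))} : Set (EuclideanSpace ℝ (Fin m))) volume := by
      unfold IntegrableOn
      rw [Measure.restrict_eq_zero.2 h0vol]
      exact integrable_zero_measure
    exact (hIU.union hsing).mono_set (subset_diff_union _ _)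
  -- value of the integral over ball 0 R
  set F : ℝ → ℝ := Set.indicator (Iio R) (fun u : ℝ => u ^ ((1:ℝ) - m)) with hF
  have hFnorm : ∀ z : EuclideanSpace ℝ (Fin m), Set.indicator (ball (0:EuclideanSpace ℝ (Fin m)) R) g0 z = F ‖z‖ := by
    intro z
    by_cases hz : ‖z‖ < R
    · rw [indicator_of_mem (mem_ball_zero_iff.2 hz), hF,
        indicator_of_mem (show ‖z‖ ∈ Iio R from hz)]
    · rw [indicator_of_notMem (fun h => hz (mem_ball_zero_iff.1 h)), hF,
        indicator_of_notMem (show ‖z‖ ∉ Iio R from hz)]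
  have hIoi : ∫ y in Ioi (0:ℝ), y ^ (m - 1) • F y = R := by
    have hcongr : ∀ y ∈ Ioi (0:ℝ),
        y ^ (m - 1) • F y = Set.indicator (Iio R) (fun _ => (1:ℝ)) y := by
      intro y hy
      have hy0 : (0:ℝ) < y := hy
      by_cases hyR : y < R
      · rw [hF, indicator_of_mem (show y ∈ Iio R from hyR),
          indicator_of_mem (show y ∈ Iio R from hyR), smul_eq_mul,
          ← Real.rpow_natCast y (m - 1), ← Real.rpow_add hy0]
        have : ((m - 1 : ℕ) : ℝ) + ((1:ℝ) - m) = 0 := by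
          push_cast [Nat.cast_sub (show 1 ≤ m by omega)]
          ring
        rw [this, Real.rpow_zero]
      · rw [hF, indicator_of_notMem (show y ∉ Iio R from hyR),
          indicator_of_notMem (show y ∉ Iio R from hyR), smul_zero]
    rw [setIntegral_congr_fun measurableSet_Ioi hcongr,
      setIntegral_indicator measurableSet_Iio]
    rw [show Ioi (0:ℝ) ∩ Iio R = Ioo 0 R from Ioi_inter_Iio]
    rw [setIntegral_const, measureReal_def, Real.volume_Ioo, smul_eq_mul, mul_one, sub_zero,
      ENNReal.toReal_ofReal hR.le]
  have value0 : ∫ z in ball (0:EuclideanSpace ℝ (Fin m)) R, g0 z = m * ω' * R := by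
    rw [← integral_indicator measurableSet_ball]
    calc ∫ z, Set.indicator (ball (0:EuclideanSpace ℝ (Fin m)) R) g0 z
        = ∫ z : EuclideanSpace ℝ (Fin m), F ‖z‖ := integral_congr_ae (Filter.Eventually.of_forall hFnorm)
      _ = m * ω' * R := by
          rw [integral_fun_norm_addHaar volume F]
          rw [finrank_euclideanSpace_fin]
          rw [hIoi]
          simp only [nsmul_eq_mul, smul_eq_mul, measureReal_def]
          ring
  -- translate to ball x R
  have hkey : ∀ y : EuclideanSpace ℝ (Fin m), Set.indicator (ball x R) (fun y => ‖x - y‖ ^ ((1:ℝ) - m)) y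
      = Set.indicator (ball (0:EuclideanSpace ℝ (Fin m)) R) g0 (x - y) := by
    intro y
    by_cases hy : y ∈ ball x R
    · have hxy : x - y ∈ ball (0:EuclideanSpace ℝ (Fin m)) R := by
        rw [mem_ball_zero_iff]
        rw [mem_ball, dist_comm, dist_eq_norm] at hy
        exact hy
      rw [indicator_of_mem hy, indicator_of_mem hxy]
    · have hxy : x - y ∉ ball (0:EuclideanSpace ℝ (Fin m)) R := by
        intro h
        apply hy
        rw [mem_ball_zero_iff] at h
        rw [mem_ball, dist_comm, dist_eq_norm]
        exact h
      rw [indicator_of_notMem hy, indicator_of_notMem hxy]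
  have hII : Integrable (fun y : EuclideanSpace ℝ (Fin m) => Set.indicator (ball (0:EuclideanSpace ℝ (Fin m)) R) g0 (x - y)) volume :=
    ((integrable_indicator_iff measurableSet_ball).2 hIball0).comp_sub_left x
  constructor
  · have hII' : Integrable (Set.indicator (ball x R)
        (fun y : EuclideanSpace ℝ (Fin m) => ‖x - y‖ ^ ((1:ℝ) - m))) volume := by
      rw [show Set.indicator (ball x R) (fun y : EuclideanSpace ℝ (Fin m) => ‖x - y‖ ^ ((1:ℝ) - m))
        = fun y : EuclideanSpace ℝ (Fin m) =>
          Set.indicator (ball (0:EuclideanSpace ℝ (Fin m)) R) g0 (x - y) from funext hkey]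
      exact hII
    exact (integrable_indicator_iff measurableSet_ball).1 hII'
  · rw [← integral_indicator measurableSet_ball]
    calc ∫ y, Set.indicator (ball x R) (fun y : EuclideanSpace ℝ (Fin m) => ‖x - y‖ ^ ((1:ℝ) - m)) y
        = ∫ y, Set.indicator (ball (0:EuclideanSpace ℝ (Fin m)) R) g0 (x - y) :=
          integral_congr_ae (Filter.Eventually.of_forall hkey)
      _ = ∫ z, Set.indicator (ball (0:EuclideanSpace ℝ (Fin m)) R) g0 z :=
          integral_sub_left_eq_self _ volume x
      _ = ∫ z in ball (0:EuclideanSpace ℝ (Fin m)) R, g0 z := integral_indicator measurableSet_ball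
      _ = m * ω' * R := value0

private lemma aux_const (m : ℕ) (hm : 3 ≤ m) (c ω : ℝ)
    (hc : c = Real.Gamma (((m : ℝ) - 2) / 2) / (4 * π ^ ((m : ℝ) / 2)))
    (hω_eq : ω = Real.sqrt π ^ m / Real.Gamma ((m:ℝ)/2 + 1)) :
    c * (((m:ℝ) - 2) * ((m:ℝ) * ω)) = 1 := by
  have hm3 : (3:ℝ) ≤ m := by exact_mod_cast hm
  have hΓ : 0 < Real.Gamma (((m:ℝ) - 2) / 2) := Real.Gamma_pos_of_pos (by linarith)
  have hπm : (0:ℝ) < π ^ ((m:ℝ)/2) := Real.rpow_pos_of_pos Real.pi_pos _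
  have hsqrt : Real.sqrt π ^ m = π ^ ((m:ℝ)/2) := by
    rw [show ((m:ℝ)/2) = (1/2) * (m:ℝ) from by ring, Real.rpow_mul Real.pi_pos.le,
      ← Real.sqrt_eq_rpow, Real.rpow_natCast]
  have hGamma : Real.Gamma ((m:ℝ)/2 + 1)
      = ((m:ℝ)/2) * ((((m:ℝ) - 2)/2) * Real.Gamma (((m:ℝ) - 2)/2)) := by
    rw [Real.Gamma_add_one (by intro h; rw [div_eq_zero_iff] at h; rcases h with h | h <;> linarith)]
    rw [show (m:ℝ)/2 = ((m:ℝ) - 2)/2 + 1 from by ring,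
      Real.Gamma_add_one (ne_of_gt (by linarith : (0:ℝ) < ((m:ℝ) - 2)/2))]
  have hm0 : (m:ℝ) ≠ 0 := by linarith
  have hm2 : ((m:ℝ) - 2) ≠ 0 := by linarith
  rw [hc, hω_eq, hsqrt, hGamma]
  field_simp
  ring

/-- Key potential estimate for the Green function of the half-space `H ⊆ ℝ^m`, `m ≥ 3`:
if `A ⊆ H` has measure at most `ω_m r^m`, then
`∫_A c_m(‖x−y‖^{2−m} − ‖x*−y‖^{2−m}) dy ≤ 2r⟨x,e⟩`. -/
theorem stmt6 (m : ℕ) (hm : 3 ≤ m) (e : EuclideanSpace ℝ (Fin m)) (he : ‖e‖ = 1)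
    (H : Set (EuclideanSpace ℝ (Fin m))) (hH : H = {y | 0 < ⟪y, e⟫})
    (x : EuclideanSpace ℝ (Fin m)) (hx : x ∈ H)
    (xstar : EuclideanSpace ℝ (Fin m)) (hxstar : xstar = x - (2 * ⟪x, e⟫) • e)
    (c : ℝ) (hc : c = Real.Gamma (((m : ℝ) - 2) / 2) / (4 * π ^ ((m : ℝ) / 2)))
    (ω : ℝ) (hω : ω = (volume (Metric.ball (0 : EuclideanSpace ℝ (Fin m)) 1)).toReal)
    (r : ℝ) (hr : 0 < r)
    (A : Set (EuclideanSpace ℝ (Fin m))) (hA : MeasurableSet A) (hAH : A ⊆ H)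
    (hAvol : volume A ≤ ENNReal.ofReal (ω * r ^ m)) :
    ∫ y in A, c * (‖x - y‖ ^ ((2 : ℝ) - m) - ‖xstar - y‖ ^ ((2 : ℝ) - m)) ≤
      2 * r * ⟪x, e⟫ := by
  haveI : Nonempty (Fin m) := ⟨⟨0, by omega⟩⟩
  have hm3 : (3:ℝ) ≤ m := by exact_mod_cast hm
  have hs : 0 < ⟪x, e⟫ := by rw [hH] at hx; exact hx
  have hΓ : 0 < Real.Gamma (((m:ℝ) - 2) / 2) := Real.Gamma_pos_of_pos (by linarith)
  have hπm : (0:ℝ) < π ^ ((m:ℝ)/2) := Real.rpow_pos_of_pos Real.pi_pos _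
  have hc_pos : 0 < c := by
    rw [hc]; exact div_pos hΓ (by positivity)
  have h1m : ((1:ℝ) - m) ≤ 0 := by linarith
  set K : ℝ := c * (((m:ℝ) - 2) * (2 * ⟪x, e⟫)) with hK
  have hK_nonneg : 0 ≤ K := by
    have : (0:ℝ) ≤ ((m:ℝ) - 2) * (2 * ⟪x, e⟫) := by nlinarith
    exact mul_nonneg hc_pos.le this
  -- pointwise bound
  have hpt : ∀ y ∈ A, c * (‖x - y‖ ^ ((2:ℝ) - m) - ‖xstar - y‖ ^ ((2:ℝ) - m))
      ≤ K * ‖x - y‖ ^ ((1:ℝ) - m) := by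
    intro y hy
    have ht : 0 < ⟪y, e⟫ := by have := hAH hy; rw [hH] at this; exact this
    have hxy : xstar - y = (x - y) - (2 * ⟪x, e⟫) • e := by rw [hxstar]; abel
    have hinner : ⟪x - y, (2 * ⟪x, e⟫) • e⟫ = 2 * ⟪x, e⟫ * (⟪x, e⟫ - ⟪y, e⟫) := by
      rw [real_inner_smul_right, inner_sub_left]
    have hnsm : ‖(2 * ⟪x, e⟫) • e‖ = 2 * ⟪x, e⟫ := by
      rw [norm_smul, he, mul_one, Real.norm_eq_abs, abs_of_pos (by linarith)]
    have hb2 : ‖xstar - y‖ ^ 2 = ‖x - y‖ ^ 2 + 4 * ⟪x, e⟫ * ⟪y, e⟫ := by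
      rw [hxy, norm_sub_sq_real, hinner, hnsm]; ring
    have hab : ‖x - y‖ ≤ ‖xstar - y‖ := by
      nlinarith [norm_nonneg (x - y), norm_nonneg (xstar - y), mul_pos hs ht]
    have hbpos : 0 < ‖xstar - y‖ := by
      nlinarith [norm_nonneg (xstar - y), sq_nonneg ‖x - y‖, mul_pos hs ht]
    have hble : ‖xstar - y‖ ≤ ‖x - y‖ + 2 * ⟪x, e⟫ := by
      rw [hxy]
      refine (norm_sub_le _ _).trans ?_
      rw [hnsm]
    have key := aux_rpow m hm (norm_nonneg (x - y)) hbpos hab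
    have hstep : ((m:ℝ) - 2) * (‖xstar - y‖ - ‖x - y‖) * ‖x - y‖ ^ ((1:ℝ) - m)
        ≤ ((m:ℝ) - 2) * (2 * ⟪x, e⟫) * ‖x - y‖ ^ ((1:ℝ) - m) := by
      apply mul_le_mul_of_nonneg_right _ (Real.rpow_nonneg (norm_nonneg _) _)
      exact mul_le_mul_of_nonneg_left (by linarith) (by linarith)
    calc c * (‖x - y‖ ^ ((2:ℝ) - m) - ‖xstar - y‖ ^ ((2:ℝ) - m))
        ≤ c * (((m:ℝ) - 2) * (2 * ⟪x, e⟫) * ‖x - y‖ ^ ((1:ℝ) - m)) :=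
          mul_le_mul_of_nonneg_left (key.trans hstep) hc_pos.le
      _ = K * ‖x - y‖ ^ ((1:ℝ) - m) := by rw [hK]; ring
  -- ball integral facts
  obtain ⟨hIball, hIval⟩ := ball_int m hm x hr
  set B : Set (EuclideanSpace ℝ (Fin m)) := Metric.ball x r with hB
  set g : EuclideanSpace ℝ (Fin m) → ℝ := fun y => ‖x - y‖ ^ ((1:ℝ) - m) with hg
  have hgm : Measurable g := by fun_prop
  have hgnn : ∀ y, 0 ≤ g y := fun y => Real.rpow_nonneg (norm_nonneg _) _
  have hBvol : volume B = ENNReal.ofReal (ω * r ^ m) := by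
    rw [hB, Measure.addHaar_ball volume x hr.le, finrank_euclideanSpace_fin, hω,
      ENNReal.ofReal_mul ENNReal.toReal_nonneg,
      ENNReal.ofReal_toReal measure_ball_lt_top.ne, mul_comm]
  have hABvol : volume A ≤ volume B := hAvol.trans_eq hBvol.symm
  have hAfin : volume A ≠ ⊤ := (hABvol.trans_lt measure_ball_lt_top).ne
  -- integrability of g on A
  have hIA1 : IntegrableOn g (A ∩ B) volume := hIball.mono_set Set.inter_subset_right
  have houtB : ∀ z ∈ A \ B, ‖g z‖ ≤ r ^ ((1:ℝ) - m) := by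
    intro z hz
    have h1 : r ≤ ‖x - z‖ := by
      have := hz.2
      rw [hB, Metric.mem_ball, not_lt, dist_comm, dist_eq_norm] at this
      exact this
    rw [Real.norm_of_nonneg (hgnn z)]
    exact Real.rpow_le_rpow_of_nonpos hr h1 h1m
  have hIA2 : IntegrableOn g (A \ B) volume := by
    refine Measure.integrableOn_of_bounded (M := r ^ ((1:ℝ) - m)) ?_ hgm.aestronglyMeasurable ?_
    · exact ((measure_mono Set.diff_subset).trans_lt hAfin.lt_top).ne
    · exact (ae_restrict_mem (hA.diff measurableSet_ball)).mono houtB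
  have hIA : IntegrableOn g A volume := by
    have := hIA1.union hIA2
    rwa [Set.inter_union_diff] at this
  -- bathtub principle
  have hsplitA : ∫ y in A, g y = (∫ y in A ∩ B, g y) + ∫ y in A \ B, g y :=
    (integral_inter_add_diff measurableSet_ball hIA).symm
  have hsplitB : ∫ y in B, g y = (∫ y in B ∩ A, g y) + ∫ y in B \ A, g y :=
    (integral_inter_add_diff hA hIball).symm
  have hABfin : volume (A ∩ B) ≠ ⊤ :=
    ((measure_mono Set.inter_subset_left).trans_lt hAfin.lt_top).ne
  have hdiff : volume (A \ B) ≤ volume (B \ A) := by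
    rw [← ENNReal.add_le_add_iff_right hABfin]
    calc volume (A \ B) + volume (A ∩ B) = volume A := measure_diff_add_inter A measurableSet_ball
      _ ≤ volume B := hABvol
      _ = volume (B \ A) + volume (B ∩ A) := (measure_diff_add_inter B hA).symm
      _ = volume (B \ A) + volume (A ∩ B) := by rw [Set.inter_comm]
  have hBAfin : volume (B \ A) ≠ ⊤ :=
    ((measure_mono Set.diff_subset).trans_lt measure_ball_lt_top).ne
  have hIBA : IntegrableOn g (B \ A) volume := hIball.mono_set Set.diff_subset
  have hconstint : IntegrableOn (fun _ => r ^ ((1:ℝ) - m)) (B \ A) volume :=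
    integrableOn_const hBAfin
  have hlow : ∀ᵐ y ∂(volume.restrict (B \ A)), r ^ ((1:ℝ) - m) ≤ g y := by
    have hxnull : ∀ᵐ y : EuclideanSpace ℝ (Fin m) ∂volume, y ≠ x := by
      have h0 : volume ({x} : Set (EuclideanSpace ℝ (Fin m))) = 0 := measure_singleton x
      rw [ae_iff]
      simpa using h0
    filter_upwards [ae_restrict_mem (measurableSet_ball.diff hA),
      ae_restrict_of_ae hxnull] with y hy hyne
    have h1 : ‖x - y‖ ≤ r := by
      have := hy.1
      rw [hB, Metric.mem_ball, dist_comm, dist_eq_norm] at this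
      exact this.le
    have h2 : 0 < ‖x - y‖ := by
      rw [norm_pos_iff, sub_ne_zero]
      exact fun h => hyne h.symm
    exact Real.rpow_le_rpow_of_nonpos h2 h1 h1m
  have hout : ∫ y in A \ B, g y ≤ ∫ y in B \ A, g y := by
    calc ∫ y in A \ B, g y ≤ ∫ _y in A \ B, r ^ ((1:ℝ) - m) := by
          refine setIntegral_mono_on hIA2 (integrableOn_const (lt_top_iff_ne_top.1 ?_))
            (hA.diff measurableSet_ball) ?_
          · exact ((measure_mono Set.diff_subset).trans_lt hAfin.lt_top)
          · intro z hz
            have := houtB z hz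
            rwa [Real.norm_of_nonneg (hgnn z)] at this
      _ = (volume (A \ B)).toReal * r ^ ((1:ℝ) - m) := by
          rw [setIntegral_const, smul_eq_mul, measureReal_def]
      _ ≤ (volume (B \ A)).toReal * r ^ ((1:ℝ) - m) :=
          mul_le_mul_of_nonneg_right (ENNReal.toReal_mono hBAfin hdiff)
            (Real.rpow_nonneg hr.le _)
      _ = ∫ _y in B \ A, r ^ ((1:ℝ) - m) := by rw [setIntegral_const, smul_eq_mul, measureReal_def]
      _ ≤ ∫ y in B \ A, g y := setIntegral_mono_ae_restrict hconstint hIBA hlow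
  have hABint : ∫ y in A ∩ B, g y = ∫ y in B ∩ A, g y := by rw [Set.inter_comm]
  have hAB_le : ∫ y in A, g y ≤ ∫ y in B, g y := by
    rw [hsplitA, hsplitB]
    linarith
  -- constant computation
  have hω_eq : ω = Real.sqrt π ^ m / Real.Gamma ((m:ℝ)/2 + 1) := by
    have hnn : (0:ℝ) ≤ Real.sqrt π ^ m / Real.Gamma ((m:ℝ)/2 + 1) :=
      div_nonneg (pow_nonneg (Real.sqrt_nonneg _) _)
        (Real.Gamma_pos_of_pos (by linarith)).le
    rw [hω, EuclideanSpace.volume_ball, Fintype.card_fin, ENNReal.ofReal_one, one_pow,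
      one_mul, ENNReal.toReal_ofReal hnn]
  have hconst : c * (((m:ℝ) - 2) * ((m:ℝ) * ω)) = 1 := aux_const m hm c ω hc hω_eq
  -- conclusion
  by_cases hint : IntegrableOn
      (fun y => c * (‖x - y‖ ^ ((2:ℝ) - m) - ‖xstar - y‖ ^ ((2:ℝ) - m))) A volume
  · calc ∫ y in A, c * (‖x - y‖ ^ ((2:ℝ) - m) - ‖xstar - y‖ ^ ((2:ℝ) - m))
        ≤ ∫ y in A, K * g y :=
          setIntegral_mono_on hint (hIA.const_mul K) hA hpt
      _ = K * ∫ y in A, g y := integral_const_mul K g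
      _ ≤ K * ∫ y in B, g y := mul_le_mul_of_nonneg_left hAB_le hK_nonneg
      _ = K * ((m:ℝ) * ((volume (Metric.ball (0 : EuclideanSpace ℝ (Fin m)) 1)).toReal) * r) :=
          by rw [hIval]
      _ = 2 * r * ⟪x, e⟫ := by
          rw [hK, ← hω]
          linear_combination (2 * r * ⟪x, e⟫) * hconst
  · rw [integral_undef hint]
    have : (0:ℝ) < 2 * r := by linarith
    exact mul_nonneg (by linarith) hs.le
end

section
/- Let e ∈ ℝ² be a unit vector, let H = {y ∈ ℝ² : ⟨y, e⟩ > 0}, let x ∈ H, and let x* = x − 2⟨x, e⟩ e. Let r > 0 and let A ⊆ H be a Lebesgue measurable set with |A| ≤ π r². Then ∫_A (2π)^{−1} log(‖x* − y‖ / ‖x − y‖) dy ≤ 2 r ⟨x, e⟩. -/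
open MeasureTheory RealInnerProductSpace Real Set Metric

local notation "E2" => EuclideanSpace ℝ (Fin 2)

lemma volume_ball_two (x : E2) (R : ℝ) (hR : 0 ≤ R) :
    volume (Metric.ball x R) = ENNReal.ofReal (π * R ^ 2) := by
  rw [EuclideanSpace.volume_ball]
  have h2 : (Fintype.card (Fin 2) : ℝ) / 2 + 1 = 2 := by simp; norm_num
  rw [h2, Real.Gamma_two, Fintype.card_fin, Real.sq_sqrt pi_nonneg, div_one,
    ← ENNReal.ofReal_pow hR, ← ENNReal.ofReal_mul (by positivity), mul_comm]

lemma lintegral_inv_norm_ball_lt_top (x : E2) :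
    ∫⁻ y in Metric.ball x 1, ENNReal.ofReal ‖x - y‖⁻¹ < ⊤ := by
  set An : ℕ → Set E2 := fun n => Metric.ball x ((1/2 : ℝ) ^ n) \ Metric.ball x ((1/2 : ℝ) ^ (n+1))
    with hAn
  have hcover : Metric.ball x 1 ⊆ {x} ∪ ⋃ n : ℕ, An n := by
    intro y hy
    by_cases hxy : y = x
    · exact Or.inl hxy
    · refine Or.inr ?_
      have hd : 0 < dist y x := dist_pos.2 hxy
      have hd1 : dist y x < 1 := mem_ball.1 hy
      have hex : ∃ n : ℕ, (1/2 : ℝ) ^ (n + 1) ≤ dist y x := by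
        obtain ⟨n, hn⟩ := exists_pow_lt_of_lt_one hd (by norm_num : (1/2 : ℝ) < 1)
        exact ⟨n, by calc (1/2:ℝ)^(n+1) ≤ (1/2:ℝ)^n :=
          pow_le_pow_of_le_one (by norm_num) (by norm_num) (Nat.le_succ n)
          _ ≤ dist y x := hn.le⟩
      classical
      set n₀ := Nat.find hex with hn₀
      have h1 : (1/2 : ℝ) ^ (n₀ + 1) ≤ dist y x := Nat.find_spec hex
      have h2 : dist y x < (1/2 : ℝ) ^ n₀ := by
        rcases Nat.eq_zero_or_pos n₀ with h | h
        · rw [h]; simpa using hd1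
        · have := Nat.find_min hex (m := n₀ - 1) (by omega)
          push_neg at this
          have : dist y x < (1/2:ℝ) ^ (n₀ - 1 + 1) := this
          rwa [Nat.sub_add_cancel h] at this
      exact Set.mem_iUnion.2 ⟨n₀, ⟨mem_ball.2 h2, fun hc => absurd (mem_ball.1 hc) (not_lt.2 h1)⟩⟩
  calc ∫⁻ y in Metric.ball x 1, ENNReal.ofReal ‖x - y‖⁻¹
      ≤ ∫⁻ y in {x} ∪ ⋃ n : ℕ, An n, ENNReal.ofReal ‖x - y‖⁻¹ := lintegral_mono_set hcover
    _ ≤ (∫⁻ y in ({x} : Set E2), ENNReal.ofReal ‖x - y‖⁻¹) +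
        ∫⁻ y in ⋃ n : ℕ, An n, ENNReal.ofReal ‖x - y‖⁻¹ := lintegral_union_le _ _ _
    _ ≤ 0 + ∑' n : ℕ, ∫⁻ y in An n, ENNReal.ofReal ‖x - y‖⁻¹ := by
        gcongr
        · exact le_of_eq (setLIntegral_measure_zero _ _ (measure_singleton x))
        · exact lintegral_iUnion_le _ _
    _ ≤ 0 + ∑' n : ℕ, ENNReal.ofReal (2 * π) * ENNReal.ofReal (1/2 : ℝ) ^ n := by
        gcongr with n
        have hb : ∀ y ∈ An n, ENNReal.ofReal ‖x - y‖⁻¹ ≤ ENNReal.ofReal ((2:ℝ) ^ (n+1)) := by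
          intro y hy
          apply ENNReal.ofReal_le_ofReal
          have h1 : (1/2 : ℝ) ^ (n+1) ≤ dist y x := not_lt.1 (fun hc => hy.2 (mem_ball.2 hc))
          have h2 : (0:ℝ) < (1/2 : ℝ) ^ (n+1) := by positivity
          have h3 : ‖x - y‖ = dist y x := by rw [dist_eq_norm, norm_sub_rev]
          rw [h3]
          calc (dist y x)⁻¹ ≤ ((1/2 : ℝ) ^ (n+1))⁻¹ := by gcongr
            _ = (2:ℝ) ^ (n+1) := by rw [one_div, inv_pow, inv_inv]
        calc ∫⁻ y in An n, ENNReal.ofReal ‖x - y‖⁻¹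
            ≤ ∫⁻ _ in An n, ENNReal.ofReal ((2:ℝ) ^ (n+1)) :=
              setLIntegral_mono measurable_const hb
          _ = ENNReal.ofReal ((2:ℝ) ^ (n+1)) * volume (An n) := by
              rw [setLIntegral_const]
          _ ≤ ENNReal.ofReal ((2:ℝ) ^ (n+1)) * volume (Metric.ball x ((1/2:ℝ)^n)) := by
              gcongr; exact diff_subset
          _ = ENNReal.ofReal ((2:ℝ) ^ (n+1)) * ENNReal.ofReal (π * ((1/2:ℝ)^n) ^ 2) := by
              rw [volume_ball_two x _ (by positivity)]
          _ = ENNReal.ofReal ((2:ℝ) ^ (n+1) * (π * ((1/2:ℝ)^n) ^ 2)) := by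
              rw [← ENNReal.ofReal_mul (by positivity)]
          _ = ENNReal.ofReal (2 * π * (1/2:ℝ)^n) := by
              congr 1
              have hc : (1/2:ℝ)^n = ((2:ℝ)^n)⁻¹ := by rw [one_div, inv_pow]
              have h2n : ((2:ℝ)^n) ≠ 0 := by positivity
              rw [hc]; field_simp; ring
          _ = ENNReal.ofReal (2 * π) * ENNReal.ofReal (1/2 : ℝ) ^ n := by
              rw [← ENNReal.ofReal_pow (by norm_num), ← ENNReal.ofReal_mul (by positivity)]
    _ < ⊤ := by
        rw [zero_add, ENNReal.tsum_mul_left, ENNReal.tsum_geometric]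
        apply ENNReal.mul_lt_top ENNReal.ofReal_lt_top
        have h12 : ENNReal.ofReal (1/2:ℝ) = 2⁻¹ := by
          rw [ENNReal.ofReal_div_of_pos two_pos, ENNReal.ofReal_one, ENNReal.ofReal_ofNat, one_div]
        rw [h12, ENNReal.one_sub_inv_two]
        simp

lemma integrableOn_inv_norm (x : E2) (S : Set E2) (hSfin : volume S ≠ ⊤) :
    IntegrableOn (fun y => ‖x - y‖⁻¹) S := by
  have hmeas : Measurable (fun y : E2 => ‖x - y‖⁻¹) :=
    ((continuous_const.sub continuous_id).norm.measurable).inv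
  refine ⟨hmeas.aestronglyMeasurable, ?_⟩
  rw [hasFiniteIntegral_iff_norm]
  have hpt : ∀ y : E2, ENNReal.ofReal ‖‖x - y‖⁻¹‖ = ENNReal.ofReal ‖x - y‖⁻¹ := by
    intro y; rw [Real.norm_eq_abs, abs_of_nonneg (by positivity)]
  calc ∫⁻ y in S, ENNReal.ofReal ‖‖x - y‖⁻¹‖
      = ∫⁻ y in S, ENNReal.ofReal ‖x - y‖⁻¹ := by simp_rw [hpt]
    _ ≤ (∫⁻ y in S ∩ Metric.ball x 1, ENNReal.ofReal ‖x - y‖⁻¹) +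
        ∫⁻ y in S \ Metric.ball x 1, ENNReal.ofReal ‖x - y‖⁻¹ := by
        conv_lhs => rw [← Set.inter_union_diff S (Metric.ball x 1)]
        exact lintegral_union_le _ _ _
    _ < ⊤ := by
        have h1 : (∫⁻ y in S ∩ Metric.ball x 1, ENNReal.ofReal ‖x - y‖⁻¹) < ⊤ :=
          lt_of_le_of_lt (lintegral_mono_set Set.inter_subset_right)
            (lintegral_inv_norm_ball_lt_top x)
        have h2 : (∫⁻ y in S \ Metric.ball x 1, ENNReal.ofReal ‖x - y‖⁻¹) < ⊤ := by
          have hb : ∀ y ∈ S \ Metric.ball x 1, ENNReal.ofReal ‖x - y‖⁻¹ ≤ 1 := by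
            intro y hy
            have h1' : (1:ℝ) ≤ dist y x := not_lt.1 (fun hc => hy.2 (mem_ball.2 hc))
            have h3 : ‖x - y‖ = dist y x := by rw [dist_eq_norm, norm_sub_rev]
            have : ‖x - y‖⁻¹ ≤ 1 := by
              rw [h3]
              exact inv_le_one_of_one_le₀ h1'
            calc ENNReal.ofReal ‖x - y‖⁻¹ ≤ ENNReal.ofReal 1 := ENNReal.ofReal_le_ofReal this
              _ = 1 := ENNReal.ofReal_one
          calc ∫⁻ y in S \ Metric.ball x 1, ENNReal.ofReal ‖x - y‖⁻¹
              ≤ ∫⁻ _ in S \ Metric.ball x 1, 1 := setLIntegral_mono measurable_const hb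
            _ = volume (S \ Metric.ball x 1) := by rw [setLIntegral_const, one_mul]
            _ ≤ volume S := measure_mono diff_subset
            _ < ⊤ := hSfin.lt_top
        exact ENNReal.add_lt_top.2 ⟨h1, h2⟩

lemma integral_ball_inv_norm (x : E2) (r : ℝ) (hr : 0 < r) :
    ∫ y in Metric.ball x r, ‖x - y‖⁻¹ = 2 * π * r := by
  -- change of variables z = x - y
  have hmp : MeasurePreserving (fun y : E2 => x - y) volume volume :=
    Measure.measurePreserving_sub_left volume x
  have hemb : MeasurableEmbedding (fun y : E2 => x - y) :=
    (MeasurableEquiv.subLeft x).measurableEmbedding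
  have hpre : (fun y : E2 => x - y) ⁻¹' (Metric.ball 0 r) = Metric.ball x r := by
    ext y
    simp [Metric.mem_ball, dist_eq_norm, norm_sub_rev x y]
  have step1 : ∫ y in Metric.ball x r, ‖x - y‖⁻¹ = ∫ z in Metric.ball (0:E2) r, ‖z‖⁻¹ := by
    rw [← hpre, hmp.setIntegral_preimage_emb hemb (fun z => ‖z‖⁻¹) (Metric.ball 0 r)]
  rw [step1]
  -- write as an integral over the whole space of a radial function
  set f : ℝ → ℝ := (Set.Iio r).indicator (fun s => s⁻¹) with hf
  have hind : ∀ z : E2, (Metric.ball (0:E2) r).indicator (fun z => ‖z‖⁻¹) z = f ‖z‖ := by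
    intro z
    by_cases hz : z ∈ Metric.ball (0:E2) r
    · rw [Set.indicator_of_mem hz, hf,
        Set.indicator_of_mem (show ‖z‖ ∈ Set.Iio r from mem_ball_zero_iff.1 hz)]
    · rw [Set.indicator_of_notMem hz, hf,
        Set.indicator_of_notMem
          (show ‖z‖ ∉ Set.Iio r from fun hc => hz (mem_ball_zero_iff.2 hc))]
  have step2 : ∫ z in Metric.ball (0:E2) r, ‖z‖⁻¹ = ∫ z : E2, f ‖z‖ := by
    rw [← integral_indicator measurableSet_ball]
    exact integral_congr_ae (Filter.Eventually.of_forall hind)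
  rw [step2, MeasureTheory.integral_fun_norm_addHaar volume f]
  rw [finrank_euclideanSpace, Fintype.card_fin]
  rw [measureReal_def, volume_ball_two 0 1 zero_le_one]
  have htoReal : (ENNReal.ofReal (π * 1 ^ 2)).toReal = π := by
    rw [ENNReal.toReal_ofReal (by positivity)]; ring
  rw [htoReal]
  have step3 : ∫ y in Set.Ioi (0:ℝ), y ^ (2 - 1) • f y = r := by
    have hcong : ∀ y ∈ Set.Ioi (0:ℝ), y ^ (2-1) • f y = (Set.Ioo 0 r).indicator (fun _ => (1:ℝ)) y := by
      intro y hy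
      have hy0 : (0:ℝ) < y := hy
      by_cases hyr : y < r
      · rw [hf]
        rw [Set.indicator_of_mem (show y ∈ Set.Iio r from hyr),
          Set.indicator_of_mem (show y ∈ Set.Ioo 0 r from ⟨hy0, hyr⟩)]
        simp [pow_one, smul_eq_mul, mul_inv_cancel₀ hy0.ne']
      · rw [hf, Set.indicator_of_notMem (show y ∉ Set.Iio r from hyr),
          Set.indicator_of_notMem (show y ∉ Set.Ioo 0 r from fun hc => hyr hc.2)]
        simp
    rw [setIntegral_congr_fun measurableSet_Ioi hcong]
    rw [setIntegral_indicator measurableSet_Ioo]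
    have : Set.Ioi (0:ℝ) ∩ Set.Ioo 0 r = Set.Ioo 0 r := by
      ext y; constructor
      · exact fun h => h.2
      · exact fun h => ⟨h.1, h⟩
    rw [this, setIntegral_const, measureReal_def, Real.volume_Ioo, smul_eq_mul, mul_one, sub_zero,
      ENNReal.toReal_ofReal hr.le]
  rw [step3]
  simp only [smul_eq_mul, nsmul_eq_mul]
  push_cast
  ring

lemma bathtub (x : E2) (r : ℝ) (hr : 0 < r) (A : Set E2) (hA : MeasurableSet A)
    (hAvol : volume A ≤ volume (Metric.ball x r)) :
    ∫ y in A, ‖x - y‖⁻¹ ≤ ∫ y in Metric.ball x r, ‖x - y‖⁻¹ := by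
  set B := Metric.ball x r with hB
  have hBmeas : MeasurableSet B := measurableSet_ball
  have hBfin : volume B ≠ ⊤ := measure_ball_lt_top.ne
  have hAfin : volume A ≠ ⊤ := (lt_of_le_of_lt hAvol measure_ball_lt_top).ne
  have hintA : IntegrableOn (fun y => ‖x - y‖⁻¹) A := integrableOn_inv_norm x A hAfin
  have hintB : IntegrableOn (fun y => ‖x - y‖⁻¹) B := integrableOn_inv_norm x B hBfin
  have hsplitA : (∫ y in A ∩ B, ‖x - y‖⁻¹) + ∫ y in A \ B, ‖x - y‖⁻¹ = ∫ y in A, ‖x - y‖⁻¹ :=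
    integral_inter_add_diff hBmeas hintA
  have hsplitB : (∫ y in B ∩ A, ‖x - y‖⁻¹) + ∫ y in B \ A, ‖x - y‖⁻¹ = ∫ y in B, ‖x - y‖⁻¹ :=
    integral_inter_add_diff hA hintB
  have hABfin : volume (A ∩ B) ≠ ⊤ := (lt_of_le_of_lt (measure_mono Set.inter_subset_left) hAfin.lt_top).ne
  -- measure comparison
  have hmeas_cmp : volume (A \ B) ≤ volume (B \ A) := by
    have h1 : volume (A \ B) + volume (A ∩ B) = volume A := measure_diff_add_inter A hBmeas
    have h2 : volume (B \ A) + volume (B ∩ A) = volume B := measure_diff_add_inter B hA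
    rw [Set.inter_comm] at h2
    have : volume (A \ B) + volume (A ∩ B) ≤ volume (B \ A) + volume (A ∩ B) := by
      rw [h1, h2]; exact hAvol
    exact (ENNReal.add_le_add_iff_right hABfin).1 this
  -- middle comparison
  have hkey : (∫ y in A \ B, ‖x - y‖⁻¹) ≤ ∫ y in B \ A, ‖x - y‖⁻¹ := by
    have hADfin : volume (A \ B) ≠ ⊤ := (lt_of_le_of_lt (measure_mono diff_subset) hAfin.lt_top).ne
    have hBDfin : volume (B \ A) ≠ ⊤ := (lt_of_le_of_lt (measure_mono diff_subset) hBfin.lt_top).ne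
    have h1 : (∫ y in A \ B, ‖x - y‖⁻¹) ≤ r⁻¹ * (volume (A \ B)).toReal := by
      have hpt : ∀ y ∈ A \ B, ‖x - y‖⁻¹ ≤ r⁻¹ := by
        intro y hy
        have h1' : r ≤ dist y x := not_lt.1 (fun hc => hy.2 (mem_ball.2 hc))
        have h3 : ‖x - y‖ = dist y x := by rw [dist_eq_norm, norm_sub_rev]
        rw [h3]
        exact inv_anti₀ hr h1'
      calc (∫ y in A \ B, ‖x - y‖⁻¹) ≤ ∫ _ in A \ B, r⁻¹ :=
            setIntegral_mono_on (hintA.mono_set diff_subset)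
              (integrableOn_const hADfin) (hA.diff hBmeas) hpt
        _ = (volume (A \ B)).toReal * r⁻¹ := by rw [setIntegral_const, smul_eq_mul, measureReal_def]
        _ = r⁻¹ * (volume (A \ B)).toReal := mul_comm _ _
    have h2 : r⁻¹ * (volume (B \ A)).toReal ≤ ∫ y in B \ A, ‖x - y‖⁻¹ := by
      set S := (B \ A) \ {x} with hS
      have hSm : MeasurableSet S := (hBmeas.diff hA).diff (measurableSet_singleton x)
      have hae : (B \ A : Set E2) =ᵐ[volume] S := by
        refine (MeasureTheory.ae_eq_set.2 ⟨?_, ?_⟩)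
        · have : (B \ A) \ S ⊆ {x} := by
            intro y hy
            by_contra hne
            exact hy.2 ⟨hy.1, hne⟩
          exact measure_mono_null this (measure_singleton x)
        · have : S \ (B \ A) = ∅ := by
            rw [Set.diff_eq_empty]; exact diff_subset
          rw [this]; exact measure_empty
      have hvol_eq : volume (B \ A) = volume S := measure_congr hae
      have hpt : ∀ y ∈ S, r⁻¹ ≤ ‖x - y‖⁻¹ := by
        intro y hy
        have hyB : y ∈ B := hy.1.1
        have hyx : y ≠ x := fun hc => hy.2 (by rw [hc]; exact rfl)
        have h3 : ‖x - y‖ = dist y x := by rw [dist_eq_norm, norm_sub_rev]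
        have hpos : 0 < dist y x := dist_pos.2 hyx
        have hlt : dist y x < r := mem_ball.1 hyB
        rw [h3]
        exact inv_anti₀ hpos hlt.le
      have hSfin : volume S ≠ ⊤ := by rw [← hvol_eq]; exact hBDfin
      calc r⁻¹ * (volume (B \ A)).toReal = r⁻¹ * (volume S).toReal := by rw [hvol_eq]
        _ = (volume S).toReal * r⁻¹ := mul_comm _ _
        _ = ∫ _ in S, r⁻¹ := by rw [setIntegral_const, smul_eq_mul, measureReal_def]
        _ ≤ ∫ y in S, ‖x - y‖⁻¹ :=
            setIntegral_mono_on (integrableOn_const hSfin)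
              (integrableOn_inv_norm x S hSfin) hSm hpt
        _ = ∫ y in B \ A, ‖x - y‖⁻¹ := (setIntegral_congr_set hae).symm
    have h3 : (volume (A \ B)).toReal ≤ (volume (B \ A)).toReal :=
      ENNReal.toReal_le_toReal hADfin hBDfin |>.2 hmeas_cmp
    calc (∫ y in A \ B, ‖x - y‖⁻¹) ≤ r⁻¹ * (volume (A \ B)).toReal := h1
      _ ≤ r⁻¹ * (volume (B \ A)).toReal := by
          apply mul_le_mul_of_nonneg_left h3 (by positivity)
      _ ≤ ∫ y in B \ A, ‖x - y‖⁻¹ := h2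
  calc ∫ y in A, ‖x - y‖⁻¹ = (∫ y in A ∩ B, ‖x - y‖⁻¹) + ∫ y in A \ B, ‖x - y‖⁻¹ := hsplitA.symm
    _ ≤ (∫ y in A ∩ B, ‖x - y‖⁻¹) + ∫ y in B \ A, ‖x - y‖⁻¹ := by
        apply add_le_add_right hkey
    _ = (∫ y in B ∩ A, ‖x - y‖⁻¹) + ∫ y in B \ A, ‖x - y‖⁻¹ := by rw [Set.inter_comm]
    _ = ∫ y in B, ‖x - y‖⁻¹ := hsplitB

/-- Key potential estimate for the Green function of the half-plane `H ⊆ ℝ²`: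
if `A ⊆ H` has measure at most `π r²`, then
`∫_A (2π)⁻¹ log(‖x*−y‖/‖x−y‖) dy ≤ 2r⟨x,e⟩`. -/
theorem stmt7 (e : EuclideanSpace ℝ (Fin 2)) (he : ‖e‖ = 1)
    (H : Set (EuclideanSpace ℝ (Fin 2))) (hH : H = {y | 0 < ⟪y, e⟫})
    (x : EuclideanSpace ℝ (Fin 2)) (hx : x ∈ H)
    (xstar : EuclideanSpace ℝ (Fin 2)) (hxstar : xstar = x - (2 * ⟪x, e⟫) • e)
    (r : ℝ) (hr : 0 < r)
    (A : Set (EuclideanSpace ℝ (Fin 2))) (hA : MeasurableSet A) (hAH : A ⊆ H)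
    (hAvol : volume A ≤ ENNReal.ofReal (π * r ^ 2)) :
    ∫ y in A, (2 * π)⁻¹ * Real.log (‖xstar - y‖ / ‖x - y‖) ≤ 2 * r * ⟪x, e⟫ := by
  set d : ℝ := ⟪x, e⟫ with hd
  have hd0 : 0 < d := by rw [hH] at hx; exact hx
  have hAfin : volume A ≠ ⊤ := (lt_of_le_of_lt hAvol ENNReal.ofReal_lt_top).ne
  -- the dominating function
  set g : EuclideanSpace ℝ (Fin 2) → ℝ := fun y => (π⁻¹ * d) * ‖x - y‖⁻¹ with hg
  -- squared norm identity
  have hsq : ∀ y : EuclideanSpace ℝ (Fin 2),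
      ‖xstar - y‖ ^ 2 = ‖x - y‖ ^ 2 + 4 * d * ⟪y, e⟫ := by
    intro y
    have h1 : xstar - y = (x - y) - (2 * d) • e := by
      rw [hxstar]; abel
    rw [h1, norm_sub_sq_real, real_inner_smul_right, norm_smul, inner_sub_left]
    rw [he]
    have : ‖(2:ℝ) * d‖ = |2 * d| := rfl
    rw [this, mul_one, sq_abs]
    ring
  -- pointwise nonnegativity
  have h_nn : ∀ y ∈ A, 0 ≤ (2 * π)⁻¹ * Real.log (‖xstar - y‖ / ‖x - y‖) := by
    intro y hy
    have hye : 0 < ⟪y, e⟫ := by have := hAH hy; rw [hH] at this; exact this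
    have hba : ‖x - y‖ ≤ ‖xstar - y‖ := by
      nlinarith [hsq y, norm_nonneg (x - y), norm_nonneg (xstar - y)]
    have hlog : 0 ≤ Real.log (‖xstar - y‖ / ‖x - y‖) := by
      rcases eq_or_lt_of_le (norm_nonneg (x - y)) with hb0 | hb0
      · rw [← hb0, div_zero, Real.log_zero]
      · exact Real.log_nonneg ((one_le_div hb0).2 hba)
    positivity
  -- pointwise bound
  have h_pt : ∀ y ∈ A, (2 * π)⁻¹ * Real.log (‖xstar - y‖ / ‖x - y‖) ≤ g y := by
    intro y _
    set b := ‖x - y‖ with hb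
    set a := ‖xstar - y‖ with ha
    have hb0 : 0 ≤ b := norm_nonneg _
    have ha0 : 0 ≤ a := norm_nonneg _
    have hab : a ≤ b + 2 * d := by
      have h1 : xstar - y = (x - y) - (2 * d) • e := by rw [hxstar]; abel
      calc a = ‖(x - y) - (2 * d) • e‖ := by rw [ha, h1]
        _ ≤ ‖x - y‖ + ‖(2 * d) • e‖ := norm_sub_le _ _
        _ = b + 2 * d := by
            rw [norm_smul, he, mul_one, Real.norm_eq_abs, abs_of_pos (by positivity)]
    rcases eq_or_lt_of_le hb0 with hb0' | hb0'
    · rw [hg]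
      simp only [← hb0', div_zero, Real.log_zero, mul_zero]
      rw [show ‖x - y‖ = b from rfl, ← hb0', inv_zero, mul_zero]
    · have hlog : Real.log (a / b) ≤ 2 * d / b := by
        rcases eq_or_lt_of_le ha0 with ha0' | ha0'
        · rw [← ha0', zero_div, Real.log_zero]
          positivity
        · calc Real.log (a / b) ≤ Real.log ((b + 2 * d) / b) :=
              Real.log_le_log (by positivity) (by gcongr)
            _ ≤ (b + 2 * d) / b - 1 := Real.log_le_sub_one_of_pos (by positivity)
            _ = 2 * d / b := by field_simp; ring
      calc (2 * π)⁻¹ * Real.log (a / b) ≤ (2 * π)⁻¹ * (2 * d / b) := by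
            apply mul_le_mul_of_nonneg_left hlog (by positivity)
        _ = g y := by
            rw [hg]
            show (2 * π)⁻¹ * (2 * d / b) = π⁻¹ * d * b⁻¹
            field_simp
  -- integrability of g on A
  have hintI : IntegrableOn (fun y => ‖x - y‖⁻¹) A := integrableOn_inv_norm x A hAfin
  have hintg : IntegrableOn g A := by
    rw [hg]
    exact hintI.const_mul _
  -- step 1 : compare with g
  have step1 : (∫ y in A, (2 * π)⁻¹ * Real.log (‖xstar - y‖ / ‖x - y‖)) ≤ ∫ y in A, g y := by
    apply integral_mono_of_nonneg
    · exact (ae_restrict_iff' hA).2 (Filter.Eventually.of_forall h_nn)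
    · exact hintg
    · exact (ae_restrict_iff' hA).2 (Filter.Eventually.of_forall h_pt)
  -- step 2 : bathtub
  have hAvol' : volume A ≤ volume (Metric.ball x r) := by
    rw [volume_ball_two x r hr.le]; exact hAvol
  have step2 : (∫ y in A, ‖x - y‖⁻¹) ≤ ∫ y in Metric.ball x r, ‖x - y‖⁻¹ :=
    bathtub x r hr A hA hAvol'
  calc (∫ y in A, (2 * π)⁻¹ * Real.log (‖xstar - y‖ / ‖x - y‖))
      ≤ ∫ y in A, g y := step1
    _ = (π⁻¹ * d) * ∫ y in A, ‖x - y‖⁻¹ := by rw [hg, MeasureTheory.integral_const_mul]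
    _ ≤ (π⁻¹ * d) * ∫ y in Metric.ball x r, ‖x - y‖⁻¹ := by
        apply mul_le_mul_of_nonneg_left step2 (by positivity)
    _ = (π⁻¹ * d) * (2 * π * r) := by rw [integral_ball_inv_norm x r hr]
    _ = 2 * r * d := by field_simp
end

section
/- Let m ≥ 2 be an integer, let R > 0, and let Ω be a non-empty open proper subset of ℝ^m with R-smooth boundary, i.e. for every x₀ ∈ ∂Ω there exist points x₁, x₂ ∈ ℝ^m such that the open ball B_R(x₁) is contained in Ω, the open ball B_R(x₂) is contained in ℝ^m ∖ cl(Ω), and cl(B_R(x₁)) ∩ cl(B_R(x₂)) = {x₀}. Let v : ℝ^m → ℝ be a function such that for every c ∈ ℝ^m and ρ > 0 with B_ρ(c) ⊆ Ω and every x ∈ B_ρ(c) one has v(x) ≥ (ρ² − ‖x − c‖²)/(2m). Then for every x ∈ Ω, v(x) ≥ dist(x, ∂Ω) · R/(2m). -/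
open Metric Set

/-- If two open balls with positive radii are disjoint, the distance between their
centres is at least the sum of the radii. -/
lemma aux_disjoint_balls {E : Type*} [NormedAddCommGroup E] [NormedSpace ℝ E]
    {a b : E} {r s : ℝ} (hr : 0 < r) (hs : 0 < s)
    (h : Disjoint (ball a r) (ball b s)) : r + s ≤ dist a b := by
  by_contra hlt
  push_neg at hlt
  have hrs : 0 < r + s := by linarith
  set t : ℝ := r / (r + s) with ht
  have ht0 : 0 < t := div_pos hr hrs
  have ht1 : t < 1 := (div_lt_one hrs).2 (by linarith)
  set z : E := a + t • (b - a) with hz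
  have hza : z ∈ ball a r := by
    rw [mem_ball, dist_eq_norm]
    have : z - a = t • (b - a) := by rw [hz]; abel
    rw [this, norm_smul, Real.norm_eq_abs, abs_of_pos ht0]
    have hba : ‖b - a‖ = dist a b := by rw [dist_eq_norm, norm_sub_rev]
    rw [hba]
    calc t * dist a b < t * (r + s) := by
          exact mul_lt_mul_of_pos_left hlt ht0
      _ = r := by rw [ht, div_mul_cancel₀ _ hrs.ne']
  have hzb : z ∈ ball b s := by
    rw [mem_ball, dist_eq_norm]
    have : z - b = (t - 1) • (b - a) := by
      rw [hz, sub_smul, one_smul]; abel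
    rw [this, norm_smul, Real.norm_eq_abs, abs_of_neg (by linarith)]
    have hba : ‖b - a‖ = dist a b := by rw [dist_eq_norm, norm_sub_rev]
    rw [hba]
    calc -(t - 1) * dist a b < -(t - 1) * (r + s) := by
          exact mul_lt_mul_of_pos_left hlt (by linarith)
      _ = s := by rw [ht, neg_mul, sub_mul, div_mul_cancel₀ _ hrs.ne']; ring
  exact (h.ne_of_mem hza hzb) rfl

/-- Lemma 2 of the paper: if `Ω ⊆ ℝ^m` is a non-empty open proper subset with `R`-smooth
boundary, and `v` dominates the torsion function of every open ball contained in `Ω`,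
then `v(x) ≥ dist(x, ∂Ω)·R/(2m)` for every `x ∈ Ω`. -/
theorem stmt8 (m : ℕ) (hm : 2 ≤ m) (R : ℝ) (hR : 0 < R)
    (Ω : Set (EuclideanSpace ℝ (Fin m))) (hΩopen : IsOpen Ω) (hΩne : Ω.Nonempty)
    (hΩproper : Ω ≠ Set.univ)
    (hsmooth : ∀ x₀ ∈ frontier Ω, ∃ x₁ x₂ : EuclideanSpace ℝ (Fin m),
      ball x₁ R ⊆ Ω ∧ ball x₂ R ⊆ (closure Ω)ᶜ ∧
      closure (ball x₁ R) ∩ closure (ball x₂ R) = {x₀})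
    (v : EuclideanSpace ℝ (Fin m) → ℝ)
    (hv : ∀ (c : EuclideanSpace ℝ (Fin m)) (ρ : ℝ), 0 < ρ → ball c ρ ⊆ Ω →
      ∀ x ∈ ball c ρ, (ρ ^ 2 - ‖x - c‖ ^ 2) / (2 * m) ≤ v x) :
    ∀ x ∈ Ω, infDist x (frontier Ω) * R / (2 * m) ≤ v x := by
  intro x hx
  have hm0 : (0 : ℝ) < 2 * m := by
    have : (2 : ℝ) ≤ (m : ℝ) := by exact_mod_cast hm
    linarith
  have hfr_ne : (frontier Ω).Nonempty := nonempty_frontier_iff.2 ⟨hΩne, hΩproper⟩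
  obtain ⟨x₀, hx₀, hdist⟩ := isClosed_frontier.exists_infDist_eq_dist hfr_ne x
  set d := infDist x (frontier Ω) with hd
  have hxin : x ∉ frontier Ω := by
    rw [hΩopen.frontier_eq]
    exact fun h => h.2 hx
  have hd0 : 0 < d := by
    rcases lt_or_ge 0 d with h | h
    · exact h
    · exfalso
      have : d = 0 := le_antisymm h (infDist_nonneg)
      rw [this] at hdist
      exact hxin (by rwa [dist_eq_zero.1 hdist.symm])
  have hdisjΩ : Disjoint Ω (closure Ω)ᶜ := disjoint_compl_right.mono_left subset_closure
  -- the ball of radius d around x is contained in Ω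
  have hball : ball x d ⊆ Ω := by
    have hsub : ball x d ⊆ Ω ∪ (closure Ω)ᶜ := by
      intro y hy
      by_contra hy'
      rw [mem_union, not_or] at hy'
      have : y ∈ frontier Ω := by
        rw [hΩopen.frontier_eq]
        exact ⟨not_not.1 hy'.2, hy'.1⟩
      have := infDist_le_dist_of_mem (x := x) this
      rw [← hd] at this
      exact absurd (lt_of_le_of_lt this (mem_ball'.1 hy)) (lt_irrefl d)
    exact (convex_ball x d).isPreconnected.subset_left_of_subset_union hΩopen
      isClosed_closure.isOpen_compl hdisjΩ hsub ⟨x, mem_ball_self hd0, hx⟩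
  rcases le_or_gt R d with hRd | hdR
  · -- easy case : use the ball of radius d around x
    refine le_trans ?_ (hv x d hd0 hball x (mem_ball_self hd0))
    have hxx : ‖x - x‖ = 0 := by simp
    rw [hxx]
    rw [div_le_div_iff₀ hm0 hm0]
    nlinarith [mul_le_mul_of_nonneg_right (mul_le_mul_of_nonneg_left hRd hd0.le) hm0.le]
  · -- hard case : d < R, use the interior tangent ball at the nearest boundary point
    obtain ⟨x₁, x₂, hB1, hB2, htang⟩ := hsmooth x₀ hx₀
    have hx₀1 : x₀ ∈ closure (ball x₁ R) := by
      have : x₀ ∈ ({x₀} : Set (EuclideanSpace ℝ (Fin m))) := rfl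
      rw [← htang] at this
      exact this.1
    have hx₀2 : x₀ ∈ closure (ball x₂ R) := by
      have : x₀ ∈ ({x₀} : Set (EuclideanSpace ℝ (Fin m))) := rfl
      rw [← htang] at this
      exact this.2
    rw [closure_ball _ hR.ne'] at hx₀1 hx₀2
    have hd10 : dist x₀ x₁ ≤ R := mem_closedBall.1 hx₀1
    have hd20 : dist x₀ x₂ ≤ R := mem_closedBall.1 hx₀2
    -- dist x x₂ = d + R
    have hdisj2 : Disjoint (ball x d) (ball x₂ R) :=
      hdisjΩ.mono hball hB2
    have hxx₂ : dist x x₂ = d + R := by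
      have h1 : d + R ≤ dist x x₂ := aux_disjoint_balls hd0 hR hdisj2
      have h2 : dist x x₂ ≤ dist x x₀ + dist x₀ x₂ := dist_triangle x x₀ x₂
      rw [← hdist] at h2
      linarith
    have hx₀x₂ : dist x₀ x₂ = R := by
      have := dist_triangle x x₀ x₂
      have h3 := abs_dist_sub_le x x₂ x₀
      rw [← hdist] at this
      nlinarith [dist_comm x₀ x₂, dist_triangle x₂ x x₀,
        dist_comm x x₀, dist_comm x₂ x]
    -- SameRay (x₀ - x) (x₂ - x₀)
    have hnu : ‖x₀ - x‖ = d := by rw [← dist_eq_norm, dist_comm, hdist]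
    have hnv : ‖x₂ - x₀‖ = R := by rw [← dist_eq_norm, dist_comm, hx₀x₂]
    have hsr : SameRay ℝ (x₀ - x) (x₂ - x₀) := by
      rw [sameRay_iff_norm_add]
      have : x₀ - x + (x₂ - x₀) = x₂ - x := by abel
      rw [this, hnu, hnv, ← dist_eq_norm, dist_comm, hxx₂]
    obtain ⟨r, hrpos, hr⟩ := hsr.exists_pos_left
      (by intro h; rw [h, norm_zero] at hnu; exact hd0.ne hnu)
      (by intro h; rw [h, norm_zero] at hnv; exact hR.ne hnv)
    have hrval : r = R / d := by
      have : ‖r • (x₀ - x)‖ = R := by rw [hr, hnv]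
      rw [norm_smul, Real.norm_eq_abs, abs_of_pos hrpos, hnu] at this
      rw [eq_div_iff hd0.ne']
      linarith
    -- the two tangent balls have centres at distance 2R, so x₁ = 2x₀ - x₂
    have hdisj12 : Disjoint (ball x₁ R) (ball x₂ R) :=
      hdisjΩ.mono hB1 hB2
    have h2R : dist x₁ x₂ = 2 * R := by
      have h1 := aux_disjoint_balls hR hR hdisj12
      have h2 : dist x₁ x₂ ≤ dist x₁ x₀ + dist x₀ x₂ := dist_triangle x₁ x₀ x₂
      rw [dist_comm x₁ x₀] at h2
      linarith
    have hx₀x₁ : dist x₀ x₁ = R := by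
      have h2 : dist x₁ x₂ ≤ dist x₁ x₀ + dist x₀ x₂ := dist_triangle x₁ x₀ x₂
      rw [dist_comm x₁ x₀] at h2
      linarith
    have heq : x₀ - x₁ = x₂ - x₀ := by
      have hn1 : ‖x₀ - x₁‖ = R := by rw [← dist_eq_norm, hx₀x₁]
      apply eq_of_norm_eq_of_norm_add_eq (hn1.trans hnv.symm)
      have h1 : x₀ - x₁ + (x₂ - x₀) = x₂ - x₁ := by abel
      rw [h1, hn1, hnv, ← dist_eq_norm, dist_comm, h2R]
      ring
    -- compute x - x₁
    have hxx₁ : x - x₁ = (r - 1) • (x₀ - x) := by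
      have : x - x₁ = (x₂ - x₀) - (x₀ - x) := by
        rw [← heq]; abel
      rw [this, ← hr, sub_smul, one_smul]
    have hnxx₁ : ‖x - x₁‖ = R - d := by
      rw [hxx₁, norm_smul, Real.norm_eq_abs, hnu, hrval,
        abs_of_pos (sub_pos.2 ((one_lt_div hd0).2 hdR))]
      rw [sub_mul, one_mul, div_mul_cancel₀ _ hd0.ne']
    have hxmem : x ∈ ball x₁ R := by
      rw [mem_ball, dist_eq_norm, hnxx₁]
      linarith
    refine le_trans ?_ (hv x₁ R hR hB1 x hxmem)
    rw [hnxx₁, div_le_div_iff₀ hm0 hm0]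
    nlinarith [mul_nonneg (mul_nonneg hd0.le (sub_nonneg.2 hdR.le)) hm0.le]
end

section
/- Let m ≥ 2 be an integer, let R > 0, and let Ω be a non-empty open proper subset of ℝ^m with R-smooth boundary, i.e. for every x₀ ∈ ∂Ω there exist points x₁, x₂ ∈ ℝ^m such that the open ball B_R(x₁) is contained in Ω, the open ball B_R(x₂) is contained in ℝ^m ∖ cl(Ω), and cl(B_R(x₁)) ∩ cl(B_R(x₂)) = {x₀}. Then for every x ∈ Ω there exists c ∈ ℝ^m such that x ∈ B_R(c) and B_R(c) ⊆ Ω. -/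
open Metric

/-- Covering property of sets with `R`-smooth boundary: every point of `Ω` lies in an open
ball of radius exactly `R` contained in `Ω`. -/
theorem stmt9 (m : ℕ) (hm : 2 ≤ m) (R : ℝ) (hR : 0 < R)
    (Ω : Set (EuclideanSpace ℝ (Fin m))) (hΩopen : IsOpen Ω) (hΩne : Ω.Nonempty)
    (hΩproper : Ω ≠ Set.univ)
    (hsmooth : ∀ x₀ ∈ frontier Ω, ∃ x₁ x₂ : EuclideanSpace ℝ (Fin m),
      ball x₁ R ⊆ Ω ∧ ball x₂ R ⊆ (closure Ω)ᶜ ∧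
      closure (ball x₁ R) ∩ closure (ball x₂ R) = {x₀}) :
    ∀ x ∈ Ω, ∃ c : EuclideanSpace ℝ (Fin m), x ∈ ball c R ∧ ball c R ⊆ Ω := by
  intro x hx
  have hcl : IsClosed Ωᶜ := hΩopen.isClosed_compl
  have hcne : Ωᶜ.Nonempty := by
    rw [Set.nonempty_compl]; exact hΩproper
  set d := Metric.infDist x Ωᶜ with hd
  have hd_pos : 0 < d := by
    rw [hd, ← hcl.notMem_iff_infDist_pos hcne]
    simp [hx]
  have hball_sub : ball x d ⊆ Ω := by
    intro z hz
    by_contra hzc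
    have : d ≤ dist x z := Metric.infDist_le_dist_of_mem (by exact hzc)
    rw [dist_comm] at this
    exact absurd (lt_of_lt_of_le hz this) (lt_irrefl _)
  rcases le_or_gt R d with hRd | hdR
  · exact ⟨x, mem_ball_self hR, fun z hz => hball_sub (lt_of_lt_of_le hz hRd)⟩
  · obtain ⟨y, hyc, hdy⟩ := hcl.exists_infDist_eq_dist hcne x
    rw [← hd] at hdy
    have hxy : dist x y = d := hdy.symm
    have hyclΩ : y ∈ closure Ω := by
      have h1 : y ∈ closure (ball x d) := by
        rw [closure_ball x hd_pos.ne']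
        exact mem_closedBall'.mpr hxy.le
      exact closure_mono hball_sub h1
    have hyfr : y ∈ frontier Ω := by
      rw [frontier_eq_closure_inter_closure, hΩopen.isClosed_compl.closure_eq]
      exact ⟨hyclΩ, hyc⟩
    obtain ⟨x₁, x₂, h1, h2, h3⟩ := hsmooth y hyfr
    have hymem : y ∈ closure (ball x₁ R) ∩ closure (ball x₂ R) := by
      rw [h3]; rfl
    rw [closure_ball x₁ hR.ne', closure_ball x₂ hR.ne'] at hymem
    have hy1le : dist y x₁ ≤ R := mem_closedBall.mp hymem.1
    have hy2le : dist y x₂ ≤ R := mem_closedBall.mp hymem.2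
    have hy1ge : R ≤ dist y x₁ := by
      by_contra h
      exact hyc (h1 (mem_ball.mpr (lt_of_not_ge h)))
    have hy2ge : R ≤ dist y x₂ := by
      by_contra h
      exact (h2 (mem_ball.mpr (lt_of_not_ge h))) hyclΩ
    have hy1 : dist y x₁ = R := le_antisymm hy1le hy1ge
    have hy2 : dist y x₂ = R := le_antisymm hy2le hy2ge
    -- distance between the two tangent ball centres is 2R
    have hdisj12 : Disjoint (ball x₁ R) (ball x₂ R) :=
      Set.disjoint_left.mpr fun z hz1 hz2 => (h2 hz2) (subset_closure (h1 hz1))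
    have h12 : dist x₁ x₂ = 2 * R := by
      have hge : R + R ≤ dist x₁ x₂ := (disjoint_ball_ball_iff hR hR).mp hdisj12
      have hle : dist x₁ x₂ ≤ R + R := by
        calc dist x₁ x₂ ≤ dist x₁ y + dist y x₂ := dist_triangle _ _ _
        _ = R + R := by rw [dist_comm x₁ y, hy1, hy2]
      linarith [le_antisymm hle hge]
    -- distance between x and x₂ is d + R
    have hdisjx2 : Disjoint (ball x d) (ball x₂ R) :=
      Set.disjoint_left.mpr fun z hz1 hz2 => (h2 hz2) (subset_closure (hball_sub hz1))
    have hx2 : dist x x₂ = d + R := by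
      have hge : d + R ≤ dist x x₂ := (disjoint_ball_ball_iff hd_pos hR).mp hdisjx2
      have hle : dist x x₂ ≤ d + R := by
        calc dist x x₂ ≤ dist x y + dist y x₂ := dist_triangle _ _ _
        _ = d + R := by rw [hxy, hy2]
      exact le_antisymm hle hge
    have hdRpos : (0:ℝ) < d + R := by linarith
    -- y is the midpoint of x₁ and x₂
    have hmid : y = AffineMap.lineMap x₁ x₂ (1/2 : ℝ) := by
      apply eq_lineMap_of_dist_eq_mul_of_dist_eq_mul
      · rw [dist_comm x₁ y, hy1, h12]; ring
      · rw [hy2, h12]; ring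
    -- y lies on the segment from x to x₂
    set t : ℝ := d / (d + R) with ht
    have hseg : y = AffineMap.lineMap x x₂ t := by
      apply eq_lineMap_of_dist_eq_mul_of_dist_eq_mul
      · rw [hxy, hx2, ht]; field_simp
      · rw [hy2, hx2, ht]; field_simp; ring
    rw [AffineMap.lineMap_apply_module] at hmid hseg
    have hkey : x₁ - x = (2 * t - 1) • (x₂ - x) := by
      have h2y : (2:ℝ) • y = x₁ + x₂ := by
        rw [hmid]; module
      rw [hseg] at h2y
      have hx1 : x₁ = (2:ℝ) • ((1 - t) • x + t • x₂) - x₂ :=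
        eq_sub_of_add_eq h2y.symm
      rw [hx1]; module
    have hdist1 : dist x x₁ = R - d := by
      rw [dist_comm, dist_eq_norm, hkey, norm_smul]
      have hnx : ‖x₂ - x‖ = d + R := by
        rw [← dist_eq_norm, dist_comm, ← hx2]
      rw [hnx, Real.norm_eq_abs]
      have h2t : 2 * t - 1 = (d - R) / (d + R) := by
        rw [ht]; field_simp; ring
      rw [h2t, abs_of_nonpos (by apply div_nonpos_of_nonpos_of_nonneg <;> linarith)]
      field_simp; ring
    exact ⟨x₁, mem_ball.mpr (by rw [hdist1]; linarith), h1⟩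
end

section
/- Let m ≥ 1 be an integer, let Ω ⊆ ℝ^m be a measurable set, let λ ≥ 0, and let p : Ω × Ω × (0, ∞) → [0, ∞) be a function, measurable in the intermediate variable, satisfying: (i) symmetry, p(x, y; t) = p(y, x; t) for all x, y ∈ Ω and t > 0; (ii) the semigroup property, p(x, y; s + t) = ∫_Ω p(x, z; s) p(z, y; t) dz for all x, y ∈ Ω and s, t > 0; (iii) the Gaussian bound p(x, y; t) ≤ (4πt)^{−m/2} exp(−‖x − y‖²/(4t)); (iv) the spectral decay p(z, z; t) ≤ e^{−sλ} p(z, z; t − s) for all z ∈ Ω and 0 < s < t. Then for all x, y ∈ Ω and t > 0: p(x, y; t) ≤ 2^{m/3} (4πt)^{−m/2} exp(−tλ/6 − ‖x − y‖ λ^{1/2}/6 − ‖x − y‖²/(24t)). -/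
open MeasureTheory Real

lemma gauss_int {m : ℕ} (c : ℝ) (hc : 0 < c) (x : EuclideanSpace ℝ (Fin m)) :
    Integrable (fun z : EuclideanSpace ℝ (Fin m) => Real.exp (-c * ‖x - z‖ ^ 2)) := by
  have h := GaussianFourier.integrable_cexp_neg_mul_sq_norm_add (V := EuclideanSpace ℝ (Fin m))
      (b := (c : ℂ)) (by simpa using hc) 0 0
  have h2 : Integrable (fun v : EuclideanSpace ℝ (Fin m) => Real.exp (-c * ‖v‖ ^ 2)) := by
    have := h.norm
    refine this.congr (Filter.Eventually.of_forall fun v => ?_)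
    simp [Complex.norm_exp, ← Complex.ofReal_pow]
  have hmp := Measure.measurePreserving_sub_left (volume : Measure (EuclideanSpace ℝ (Fin m))) x
  have := (hmp.integrable_comp h2.aestronglyMeasurable).2 h2
  simpa [Function.comp_def] using this

lemma exp_aux (t lam d sl : ℝ) (ht : 0 < t) (hsl : sl ^ 2 = lam) :
    -t*lam - d^2/(4*t) ≤ 3 * (-t*lam/6 - d*sl/6 - d^2/(24*t)) := by
  subst hsl
  rw [← sub_nonneg]
  have key : 3 * (-t*(sl^2)/6 - d*sl/6 - d^2/(24*t)) - (-t*(sl^2) - d^2/(4*t))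
      = (2*t*sl - d)^2 / (8*t) := by
    field_simp
    ring
  rw [key]
  positivity

/-- Heat-kernel estimate (e40) of the paper: a symmetric kernel on `Ω ⊆ ℝ^m` with the
semigroup property, the Gaussian upper bound and spectral decay of rate `λ ≥ 0` satisfies
`p(x,y;t) ≤ 2^{m/3}(4πt)^{−m/2} exp(−tλ/6 − ‖x−y‖λ^{1/2}/6 − ‖x−y‖²/(24t))`. -/
theorem stmt11 (m : ℕ) (hm : 1 ≤ m) (Ω : Set (EuclideanSpace ℝ (Fin m)))
    (hΩ : MeasurableSet Ω) (lam : ℝ) (hlam : 0 ≤ lam)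
    (p : EuclideanSpace ℝ (Fin m) → EuclideanSpace ℝ (Fin m) → ℝ → ℝ)
    (hnonneg : ∀ x ∈ Ω, ∀ y ∈ Ω, ∀ t : ℝ, 0 < t → 0 ≤ p x y t)
    (hmeas : ∀ (x : EuclideanSpace ℝ (Fin m)) (t : ℝ), Measurable (fun z => p x z t))
    (hsymm : ∀ x ∈ Ω, ∀ y ∈ Ω, ∀ t : ℝ, 0 < t → p x y t = p y x t)
    (hsemi : ∀ x ∈ Ω, ∀ y ∈ Ω, ∀ s t : ℝ, 0 < s → 0 < t →
      p x y (s + t) = ∫ z in Ω, p x z s * p z y t)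
    (hgauss : ∀ x ∈ Ω, ∀ y ∈ Ω, ∀ t : ℝ, 0 < t →
      p x y t ≤ (4 * π * t) ^ (-(m : ℝ) / 2) * exp (-‖x - y‖ ^ 2 / (4 * t)))
    (hspec : ∀ z ∈ Ω, ∀ s t : ℝ, 0 < s → s < t →
      p z z t ≤ exp (-s * lam) * p z z (t - s)) :
    ∀ x ∈ Ω, ∀ y ∈ Ω, ∀ t : ℝ, 0 < t →
      p x y t ≤ 2 ^ ((m : ℝ) / 3) * (4 * π * t) ^ (-(m : ℝ) / 2) *
        exp (-t * lam / 6 - ‖x - y‖ * Real.sqrt lam / 6 - ‖x - y‖ ^ 2 / (24 * t)) := by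
  intro x hx y hy t ht
  have hπ : (0:ℝ) < π := Real.pi_pos
  set s : ℝ := t / 2 with hs_def
  have hs : 0 < s := by positivity
  set μ : Measure (EuclideanSpace ℝ (Fin m)) := volume.restrict Ω with hμ
  set C : ℝ := (4 * π * s) ^ (-(m:ℝ) / 2) with hC
  have hC0 : 0 < C := by positivity
  -- pointwise Gaussian domination for time s
  have hdom : ∀ w ∈ Ω, ∀ z ∈ Ω, p w z s ≤ C * Real.exp (-(1/(4*s)) * ‖w - z‖ ^ 2) := by
    intro w hw z hz
    have := hgauss w hw z hz s hs
    refine this.trans_eq ?_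
    congr 1
    ring_nf
  -- square integrability of z ↦ p w z s on Ω
  have hmem : ∀ w ∈ Ω, MemLp (fun z => p w z s) 2 μ := by
    intro w hw
    have hint : Integrable (fun z => (p w z s) ^ 2) μ := by
      refine Integrable.mono'
        (g := fun z => (C^2) * Real.exp (-(1/(4*s)) * ‖w - z‖ ^ 2))
        (((gauss_int (1/(4*s)) (by positivity) w).const_mul (C^2)).restrict)
        (((hmeas w s).pow_const 2).aestronglyMeasurable) ?_
      filter_upwards [ae_restrict_mem hΩ] with z hz
      have h1 : 0 ≤ p w z s := hnonneg w hw z hz s hs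
      have h2 := hdom w hw z hz
      have h3 : Real.exp (-(1/(4*s)) * ‖w - z‖ ^ 2) ≤ 1 := by
        rw [Real.exp_le_one_iff]
        have : (0:ℝ) ≤ (1/(4*s)) * ‖w - z‖ ^ 2 := by positivity
        linarith
      rw [Real.norm_of_nonneg (by positivity)]
      calc p w z s ^ 2 ≤ (C * Real.exp (-(1/(4*s)) * ‖w - z‖ ^ 2)) ^ 2 := by
            exact pow_le_pow_left₀ h1 h2 2
        _ ≤ C ^ 2 * Real.exp (-(1/(4*s)) * ‖w - z‖ ^ 2) := by
            rw [mul_pow]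
            have : Real.exp (-(1/(4*s)) * ‖w - z‖ ^ 2) ^ 2
                ≤ Real.exp (-(1/(4*s)) * ‖w - z‖ ^ 2) := by
              nlinarith [Real.exp_pos (-(1/(4*s)) * ‖w - z‖ ^ 2)]
            nlinarith [sq_nonneg C]
    exact (memLp_two_iff_integrable_sq (hmeas w s).aestronglyMeasurable).2 hint
  -- Cauchy–Schwarz via Hölder
  have hconj : Real.HolderConjugate 2 2 := Real.HolderConjugate.two_two
  have hae : ∀ w ∈ Ω, 0 ≤ᵐ[μ] fun z => p w z s := by
    intro w hw
    filter_upwards [ae_restrict_mem hΩ] with z hz using hnonneg w hw z hz s hs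
  have hofReal : (ENNReal.ofReal 2) = 2 := by norm_num
  have hCS := integral_mul_le_Lp_mul_Lq_of_nonneg (μ := μ) hconj (hae x hx) (hae y hy)
      (by rw [hofReal]; exact hmem x hx) (by rw [hofReal]; exact hmem y hy)
  simp_rw [Real.rpow_two, ← Real.sqrt_eq_rpow, sq] at hCS
  -- semigroup identities
  have hst : s + s = t := by rw [hs_def]; ring
  have hsemi_xy : p x y t = ∫ z, p x z s * p y z s ∂μ := by
    have h1 := hsemi x hx y hy s s hs hs
    rw [hst] at h1
    rw [h1, hμ]
    exact setIntegral_congr_fun hΩ (fun z hz => by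
      rw [hsymm z hz y hy s hs])
  have hsemi_diag : ∀ w ∈ Ω, (∫ z, p w z s * p w z s ∂μ) = p w w t := by
    intro w hw
    have h1 := hsemi w hw w hw s s hs hs
    rw [hst] at h1
    rw [h1, hμ]
    exact setIntegral_congr_fun hΩ (fun z hz => by
      rw [hsymm w hw z hz s hs])
  rw [hsemi_diag x hx, hsemi_diag y hy] at hCS
  rw [← hsemi_xy] at hCS
  -- diagonal bound
  set A : ℝ := (4 * π * t) ^ (-(m:ℝ) / 2) with hA
  have hA0 : 0 < A := by positivity
  set D : ℝ := 2 ^ ((m:ℝ)/2) * A * Real.exp (-t * lam / 2) with hD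
  have hD0 : 0 < D := by positivity
  have hCA : C = 2 ^ ((m:ℝ)/2) * A := by
    rw [hC, hA, show (4*π*s : ℝ) = (4*π*t)/2 by rw [hs_def]; ring,
      Real.div_rpow (by positivity) (by norm_num),
      show (-(m:ℝ)/2) = -((m:ℝ)/2) by ring, Real.rpow_neg (by norm_num : (0:ℝ) ≤ 2),
      div_eq_mul_inv, inv_inv]
    ring
  have hdiag : ∀ w ∈ Ω, p w w t ≤ D := by
    intro w hw
    have h1 := hspec w hw s t hs (by rw [hs_def]; linarith)
    have hts : t - s = s := by rw [hs_def]; ring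
    rw [hts] at h1
    have h2 := hgauss w hw w hw s hs
    rw [sub_self, norm_zero] at h2
    norm_num at h2
    have h3 : Real.exp (-s * lam) = Real.exp (-t * lam / 2) := by
      rw [hs_def]; ring_nf
    calc p w w t ≤ Real.exp (-s * lam) * p w w s := h1
      _ ≤ Real.exp (-s * lam) * C := by
          have := (Real.exp_pos (-s*lam)).le
          exact mul_le_mul_of_nonneg_left (by rw [hC]; exact h2) this
      _ = D := by rw [h3, hCA, hD]; ring
  have hpD : p x y t ≤ D := by
    calc p x y t ≤ Real.sqrt (p x x t) * Real.sqrt (p y y t) := hCS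
      _ ≤ Real.sqrt D * Real.sqrt D := by
          gcongr <;> [exact hdiag x hx; exact hdiag y hy]
      _ = D := Real.mul_self_sqrt hD0.le
  -- Gaussian bound at time t
  set d : ℝ := ‖x - y‖ with hd
  have hd0 : 0 ≤ d := norm_nonneg _
  set Gb : ℝ := A * Real.exp (-d ^ 2 / (4 * t)) with hGb
  have hGb0 : 0 < Gb := by positivity
  have hpG : p x y t ≤ Gb := hgauss x hx y hy t ht
  -- combine via cube
  have hp0 : 0 ≤ p x y t := hnonneg x hx y hy t ht
  set e : ℝ := -t * lam / 6 - d * Real.sqrt lam / 6 - d ^ 2 / (24 * t) with he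
  set R : ℝ := 2 ^ ((m:ℝ)/3) * A * Real.exp e with hR
  have hR0 : 0 < R := by positivity
  show p x y t ≤ R
  have hcube : p x y t ^ 3 ≤ R ^ 3 := by
    have step1 : p x y t ^ 3 ≤ D * D * Gb := by
      calc p x y t ^ 3 = p x y t * p x y t * p x y t := by ring
        _ ≤ D * D * Gb := by
            exact mul_le_mul (mul_le_mul hpD hpD hp0 hD0.le) hpG hp0 (by positivity)
    refine step1.trans ?_
    have h2m : (2:ℝ) ^ ((m:ℝ)/2) * 2 ^ ((m:ℝ)/2) = 2 ^ (m:ℝ) := by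
      rw [← Real.rpow_add (by norm_num)]; ring_nf
    have h3m : ((2:ℝ) ^ ((m:ℝ)/3)) ^ (3:ℕ) = 2 ^ (m:ℝ) := by
      rw [← Real.rpow_natCast ((2:ℝ) ^ ((m:ℝ)/3)) 3, ← Real.rpow_mul (by norm_num)]
      norm_num
    have hexp3 : Real.exp e ^ (3:ℕ) = Real.exp (3 * e) := by
      rw [← Real.exp_nat_mul]; norm_num
    have hDDG : D * D * Gb = 2 ^ (m:ℝ) * (A * A * A) * Real.exp (-t*lam - d^2/(4*t)) := by
      rw [hD, hGb]
      rw [show (2 ^ ((m:ℝ)/2) * A * rexp (-t * lam / 2)) * (2 ^ ((m:ℝ)/2) * A * rexp (-t * lam / 2))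
            * (A * rexp (-d ^ 2 / (4 * t)))
          = (2 ^ ((m:ℝ)/2) * 2 ^ ((m:ℝ)/2)) * (A*A*A)
            * (rexp (-t * lam / 2) * rexp (-t * lam / 2) * rexp (-d ^ 2 / (4 * t))) from by ring,
        h2m, ← Real.exp_add, ← Real.exp_add]
      congr 1
      ring
    have hR3 : R ^ 3 = 2 ^ (m:ℝ) * (A * A * A) * Real.exp (3 * e) := by
      rw [hR, mul_pow, mul_pow, h3m, hexp3]; ring
    rw [hDDG, hR3]
    have hexp : Real.exp (-t*lam - d^2/(4*t)) ≤ Real.exp (3 * e) := by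
      rw [Real.exp_le_exp, he]
      exact exp_aux t lam d (Real.sqrt lam) ht (Real.sq_sqrt hlam)
    have : (0:ℝ) ≤ 2 ^ (m:ℝ) * (A * A * A) := by positivity
    exact mul_le_mul_of_nonneg_left hexp this
  exact le_of_pow_le_pow_left₀ (by norm_num) hR0.le hcube
end

section
/- Let m ≥ 1 be an integer, let R > 0 and γ ∈ (0,1). For a Lebesgue measurable set S ⊆ [0, R] define h_S(t) = ∫₀ᵗ s^{m−1}(γ − 1_S(s)) ds for t ∈ [0, R] and v_S(r) = ∫_r^R t^{1−m} h_S(t) dt for r ∈ [0, R]. Let A ⊆ [0, R] be measurable and let ρ ∈ [0, R] satisfy ∫_A s^{m−1} ds = ρ^m/m. Then for every r ∈ [0, R], v_{[0,ρ]}(r) ≤ v_A(r). -/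
open MeasureTheory intervalIntegral

namespace Stmt14Aux

lemma int_pow_Ioc (m : ℕ) (hm : 1 ≤ m) {c : ℝ} (hc : 0 ≤ c) :
    ∫ s in Set.Ioc (0:ℝ) c, s ^ (m - 1) = c ^ m / m := by
  have h1 : m - 1 + 1 = m := Nat.sub_add_cancel hm
  rw [← intervalIntegral.integral_of_le hc, integral_pow, h1,
    zero_pow (by omega : m ≠ 0), sub_zero, ← Nat.cast_succ, Nat.succ_eq_add_one, h1]

lemma Ioc_inter_Icc' {t ρ : ℝ} : Set.Ioc (0:ℝ) t ∩ Set.Icc 0 ρ = Set.Ioc 0 (min t ρ) := by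
  ext s
  simp only [Set.mem_inter_iff, Set.mem_Ioc, Set.mem_Icc, le_min_iff]
  constructor
  · rintro ⟨⟨h0, ht⟩, _, hρ'⟩; exact ⟨h0, ht, hρ'⟩
  · rintro ⟨h0, ht, hρ'⟩; exact ⟨⟨h0, ht⟩, h0.le, hρ'⟩

end Stmt14Aux

/-- Among radial subsets of the ball `B_R ⊆ ℝ^m` of prescribed measure, the concentric
ball minimises the radial solution `v_{B_R,A,γ}` pointwise: with radial profiles
`h_S(t) = ∫₀ᵗ s^{m−1}(γ − 1_S(s)) ds` and `v_S(r) = ∫_r^R t^{1−m} h_S(t) dt`, if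
`∫_A s^{m−1} ds = ρ^m/m` then `v_{[0,ρ]} ≤ v_A` on `[0,R]`. -/
theorem stmt14 (m : ℕ) (hm : 1 ≤ m) (R : ℝ) (hR : 0 < R)
    (γ : ℝ) (hγ : γ ∈ Set.Ioo (0 : ℝ) 1)
    (h : Set ℝ → ℝ → ℝ)
    (hh : ∀ (S : Set ℝ) (t : ℝ), t ∈ Set.Icc (0 : ℝ) R →
      h S t = ∫ s in (0 : ℝ)..t, s ^ (m - 1) * (γ - S.indicator (fun _ => (1 : ℝ)) s))
    (v : Set ℝ → ℝ → ℝ)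
    (hv : ∀ (S : Set ℝ) (r : ℝ), r ∈ Set.Icc (0 : ℝ) R →
      v S r = ∫ t in r..R, (t ^ (m - 1))⁻¹ * h S t)
    (A : Set ℝ) (hA : MeasurableSet A) (hAsub : A ⊆ Set.Icc (0 : ℝ) R)
    (ρ : ℝ) (hρ : ρ ∈ Set.Icc (0 : ℝ) R)
    (hmass : ∫ s in A, s ^ (m - 1) = ρ ^ m / m) :
    ∀ r ∈ Set.Icc (0 : ℝ) R, v (Set.Icc 0 ρ) r ≤ v A r := by
  obtain ⟨hγ0, hγ1⟩ := hγ
  have hmR : (0:ℝ) < m := by exact_mod_cast Nat.pos_of_ne_zero (by omega)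
  have hMcont : Continuous fun s : ℝ => s ^ (m - 1) := continuous_pow _
  have hMintIcc : IntegrableOn (fun s : ℝ => s ^ (m - 1)) (Set.Icc 0 R) :=
    hMcont.integrableOn_Icc
  -- pointwise rewriting of the integrand
  have find : ∀ (S : Set ℝ) (s : ℝ),
      s ^ (m - 1) * (γ - S.indicator (fun _ => (1:ℝ)) s)
        = γ * s ^ (m - 1) - S.indicator (fun s => s ^ (m - 1)) s := by
    intro S s
    by_cases hs : s ∈ S
    · simp [hs]; ring
    · simp [hs, mul_comm]
  have hfS_int : ∀ S : Set ℝ, MeasurableSet S →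
      IntegrableOn (fun s => s ^ (m - 1) * (γ - S.indicator (fun _ => (1:ℝ)) s))
        (Set.Icc 0 R) := by
    intro S hS
    have e : (fun s => s ^ (m - 1) * (γ - S.indicator (fun _ => (1:ℝ)) s))
        = fun s => γ * s ^ (m - 1) - S.indicator (fun s => s ^ (m - 1)) s :=
      funext (find S)
    rw [e]
    exact (hMintIcc.const_mul γ).sub (hMintIcc.indicator hS)
  have hII : ∀ (f : ℝ → ℝ), IntegrableOn f (Set.Icc 0 R) → ∀ t ∈ Set.Icc (0:ℝ) R,
      IntervalIntegrable f volume 0 t := by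
    intro f hf t ht
    apply IntegrableOn.intervalIntegrable
    rw [Set.uIcc_of_le ht.1]
    exact hf.mono_set (Set.Icc_subset_Icc le_rfl ht.2)
  -- formula for h
  have hform : ∀ (S : Set ℝ), MeasurableSet S → ∀ t ∈ Set.Icc (0:ℝ) R,
      h S t = γ * (∫ s in (0:ℝ)..t, s ^ (m - 1))
        - ∫ s in Set.Ioc 0 t ∩ S, s ^ (m - 1) := by
    intro S hS t ht
    rw [hh S t ht]
    have e : (∫ s in (0:ℝ)..t, s ^ (m - 1) * (γ - S.indicator (fun _ => (1:ℝ)) s))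
        = ∫ s in (0:ℝ)..t,
            (γ * s ^ (m - 1) - S.indicator (fun s => s ^ (m - 1)) s) := by
      apply intervalIntegral.integral_congr
      intro s _
      exact find S s
    rw [e, intervalIntegral.integral_sub (hII _ (hMintIcc.const_mul γ) t ht)
        (hII _ (hMintIcc.indicator hS) t ht),
      intervalIntegral.integral_const_mul,
      intervalIntegral.integral_of_le ht.1, intervalIntegral.integral_of_le ht.1, setIntegral_indicator hS]
  -- the core comparison of masses
  have hFineq : ∀ t ∈ Set.Icc (0:ℝ) R,
      (∫ s in Set.Ioc 0 t ∩ A, s ^ (m - 1))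
        ≤ ∫ s in Set.Ioc 0 t ∩ Set.Icc 0 ρ, s ^ (m - 1) := by
    intro t ht
    rw [Stmt14Aux.Ioc_inter_Icc', Stmt14Aux.int_pow_Ioc m hm (le_min ht.1 hρ.1)]
    rcases le_total t ρ with hcase | hcase
    · rw [min_eq_left hcase]
      have hsub : Set.Ioc (0:ℝ) t ⊆ Set.Icc 0 R :=
        Set.Ioc_subset_Icc_self.trans (Set.Icc_subset_Icc le_rfl ht.2)
      calc (∫ s in Set.Ioc 0 t ∩ A, s ^ (m - 1))
          ≤ ∫ s in Set.Ioc 0 t, s ^ (m - 1) := by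
            apply setIntegral_mono_set (hMintIcc.mono_set hsub)
            · exact ae_restrict_of_forall_mem measurableSet_Ioc
                (fun s hs => pow_nonneg hs.1.le _)
            · exact HasSubset.Subset.eventuallyLE Set.inter_subset_left
        _ = t ^ m / m := Stmt14Aux.int_pow_Ioc m hm ht.1
    · rw [min_eq_right hcase]
      calc (∫ s in Set.Ioc 0 t ∩ A, s ^ (m - 1))
          ≤ ∫ s in A, s ^ (m - 1) := by
            apply setIntegral_mono_set (hMintIcc.mono_set hAsub)
            · exact ae_restrict_of_forall_mem hA
                (fun s hs => pow_nonneg (hAsub hs).1 _)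
            · exact HasSubset.Subset.eventuallyLE Set.inter_subset_right
        _ = ρ ^ m / m := hmass
  have hkey : ∀ t ∈ Set.Icc (0:ℝ) R, h (Set.Icc 0 ρ) t ≤ h A t := by
    intro t ht
    rw [hform _ measurableSet_Icc t ht, hform _ hA t ht]
    exact sub_le_sub_left (hFineq t ht) _
  -- bound on |h S t|
  have hbound : ∀ (S : Set ℝ), MeasurableSet S → ∀ t ∈ Set.Icc (0:ℝ) R,
      |h S t| ≤ t ^ m / m := by
    intro S hS t ht
    rw [hh S t ht]
    have h1 : |∫ s in (0:ℝ)..t, s ^ (m - 1) * (γ - S.indicator (fun _ => (1:ℝ)) s)|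
        ≤ ∫ s in (0:ℝ)..t, |s ^ (m - 1) * (γ - S.indicator (fun _ => (1:ℝ)) s)| :=
      intervalIntegral.abs_integral_le_integral_abs ht.1
    refine h1.trans ?_
    have h2 : (∫ s in (0:ℝ)..t, |s ^ (m - 1) * (γ - S.indicator (fun _ => (1:ℝ)) s)|)
        ≤ ∫ s in (0:ℝ)..t, s ^ (m - 1) := by
      apply intervalIntegral.integral_mono_on ht.1
        ((hII _ (hfS_int S hS) t ht).abs) (hII _ hMintIcc t ht)
      intro s hs
      rw [abs_mul, abs_pow, abs_of_nonneg hs.1]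
      have hind : |γ - S.indicator (fun _ => (1:ℝ)) s| ≤ 1 := by
        by_cases hsS : s ∈ S
        · simp only [Set.indicator_of_mem hsS]
          rw [abs_of_nonpos (by linarith)]
          linarith
        · simp only [Set.indicator_of_notMem hsS, sub_zero]
          rw [abs_of_pos hγ0]; linarith
      calc s ^ (m - 1) * |γ - S.indicator (fun _ => (1:ℝ)) s|
          ≤ s ^ (m - 1) * 1 := by
            exact mul_le_mul_of_nonneg_left hind (pow_nonneg hs.1 _)
        _ = s ^ (m - 1) := mul_one _
    refine h2.trans ?_
    rw [intervalIntegral.integral_of_le ht.1]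
    exact le_of_eq (Stmt14Aux.int_pow_Ioc m hm ht.1)
  -- continuity of h S on [0, R]
  have hcont : ∀ S : Set ℝ, MeasurableSet S → ContinuousOn (h S) (Set.Icc 0 R) := by
    intro S hS
    have hc := continuousOn_primitive (μ := volume) (a := (0:ℝ)) (b := R)
      (hfS_int S hS)
    refine ContinuousOn.congr hc ?_
    intro t ht
    rw [hh S t ht, intervalIntegral.integral_of_le ht.1]
  -- integrability of the v-integrand
  have hgint : ∀ S : Set ℝ, MeasurableSet S → ∀ r ∈ Set.Icc (0:ℝ) R,
      IntervalIntegrable (fun t => (t ^ (m - 1))⁻¹ * h S t) volume r R := by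
    intro S hS r hr
    rw [intervalIntegrable_iff_integrableOn_Icc_of_le hr.2]
    have hIcc : Set.Icc r R ⊆ Set.Icc 0 R := Set.Icc_subset_Icc hr.1 le_rfl
    have hmeas : AEStronglyMeasurable (fun t => (t ^ (m - 1))⁻¹ * h S t)
        (volume.restrict (Set.Icc r R)) := by
      apply AEStronglyMeasurable.mul
      · exact ((measurable_id.pow_const _).inv).aestronglyMeasurable
      · exact ((hcont S hS).mono hIcc).aestronglyMeasurable measurableSet_Icc
    refine ⟨hmeas, ?_⟩
    apply HasFiniteIntegral.restrict_of_bounded (C := R / m) measure_Icc_lt_top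
    apply ae_restrict_of_forall_mem measurableSet_Icc
    intro t htm
    have ht : t ∈ Set.Icc (0:ℝ) R := hIcc htm
    rcases eq_or_lt_of_le ht.1 with h0 | h0
    · have hz : h S 0 = 0 := by
        rw [hh S 0 ⟨le_rfl, hR.le⟩]; simp
      rw [← h0, hz, mul_zero, norm_zero]
      positivity
    · have hb := hbound S hS t ht
      have hpow : 0 < t ^ (m - 1) := pow_pos h0 _
      have htm' : t ^ m = t ^ (m - 1) * t := by
        conv_lhs => rw [show m = m - 1 + 1 from (Nat.sub_add_cancel hm).symm]
        rw [pow_succ]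
      rw [Real.norm_eq_abs, abs_mul, abs_inv, abs_pow, abs_of_pos h0]
      calc (t ^ (m - 1))⁻¹ * |h S t|
          ≤ (t ^ (m - 1))⁻¹ * (t ^ m / m) :=
            mul_le_mul_of_nonneg_left hb (inv_nonneg.mpr hpow.le)
        _ = t / m := by
            rw [htm']; field_simp
        _ ≤ R / m := by
            gcongr
            exact ht.2
  -- conclusion
  intro r hr
  rw [hv _ r hr, hv _ r hr]
  apply intervalIntegral.integral_mono_on hr.2 (hgint _ measurableSet_Icc r hr)
    (hgint _ hA r hr)
  intro t ht'
  have ht : t ∈ Set.Icc (0:ℝ) R := ⟨hr.1.trans ht'.1, ht'.2⟩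
  exact mul_le_mul_of_nonneg_left (hkey t ht) (inv_nonneg.mpr (pow_nonneg ht.1 _))
end

section
/- Let γ ∈ (0, 1), set L = log(1/γ) and a = (γ/(1+L))^{1/2}. Then 0 < a < 1 and γ/4 − a²/4 + (a²/4)·log(a²) = −(γ/4)·log(1+L)/(1+L) < 0. -/
open Real

/-- The value at the centre of the solution `v_{B₁,B_a,γ}` in dimension two, for
`a = (γ/(1+log(1/γ)))^{1/2}`: one has `0 < a < 1` and
`γ/4 − a²/4 + (a²/4)log(a²) = −(γ/4)log(1+L)/(1+L) < 0` with `L = log(1/γ)`. -/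
theorem stmt16 (γ : ℝ) (hγ : γ ∈ Set.Ioo (0 : ℝ) 1)
    (L : ℝ) (hL : L = Real.log (1 / γ))
    (a : ℝ) (ha : a = Real.sqrt (γ / (1 + L))) :
    0 < a ∧ a < 1 ∧
    γ / 4 - a ^ 2 / 4 + (a ^ 2 / 4) * Real.log (a ^ 2) =
      -(γ / 4) * Real.log (1 + L) / (1 + L) ∧
    -(γ / 4) * Real.log (1 + L) / (1 + L) < 0 := by
  obtain ⟨hγ0, hγ1⟩ := hγ
  have hLpos : 0 < L := by
    rw [hL]; exact Real.log_pos (by rw [lt_div_iff₀ hγ0]; linarith)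
  have h1L : (0:ℝ) < 1 + L := by linarith
  have hfrac : 0 < γ / (1 + L) := div_pos hγ0 h1L
  have ha2 : a ^ 2 = γ / (1 + L) := by
    rw [ha, sq_sqrt hfrac.le]
  have hapos : 0 < a := by rw [ha]; exact Real.sqrt_pos.2 hfrac
  have ha1 : a < 1 := by
    have h2 : a ^ 2 < 1 := by
      rw [ha2, div_lt_one h1L]; linarith
    nlinarith
  have hlogL : 0 < Real.log (1 + L) := Real.log_pos (by linarith)
  have hloga2 : Real.log (a ^ 2) = -L - Real.log (1 + L) := by
    rw [ha2, Real.log_div hγ0.ne' h1L.ne', hL, Real.log_div one_ne_zero hγ0.ne',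
      Real.log_one]
    ring
  refine ⟨hapos, ha1, ?_, ?_⟩
  · rw [hloga2, ha2]
    field_simp
    ring
  · have h := div_pos (mul_pos (by linarith : (0:ℝ) < γ / 4) hlogL) h1L
    linarith [(by ring : -(γ / 4) * Real.log (1 + L) / (1 + L) = -(γ / 4 * Real.log (1 + L) / (1 + L)))]
end
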